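/- arXiv:1903.07483 — 5 statements merged into one kernel-verified Lean document; each statement's English description precedes it below -/
import Mathlib

section
/- Equivalence of the nonlinear and linearized (A)-conditions for C¹ generating maps. Let X₁, Y₁, X₂, Y₂ be Banach spaces, let F : X₁ × Y₂ → X₂ and G : X₁ × Y₂ → Y₁ be continuously Fréchet differentiable, and let α, α′, λ_u, β ≥ 0 with α·β < 1. Then the following are equivalent. (a) The correspondence H ∼ (F,G) satisfies the (A)(α;α′,λ_u) condition, and Lip G(·,y) ≤ β for every y ∈ Y₂. (b) For every (x₁,y₂) ∈ X₁ × Y₂: for all (ξ,η′) ∈ X₁ × Y₂, writing η = DG(x₁,y₂)(ξ,η′) and ξ′ = DF(x₁,y₂)(ξ,η′), the inequality ‖ξ‖ ≤ α·‖η‖ implies both ‖ξ′‖ ≤ α′·‖η′‖ and ‖η‖ ≤ λ_u·‖η′‖; and ‖D₁G(x₁,y₂)‖ ≤ β. -/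
open Filter Set Topology ContinuousLinearMap

set_option maxHeartbeats 2000000 in
/-- Equivalence of the nonlinear and linearized (A)-conditions for C¹ generating maps. -/
theorem AB_condition_C1_equivalence
    {X₁ Y₁ X₂ Y₂ : Type*}
    [NormedAddCommGroup X₁] [NormedSpace ℝ X₁] [CompleteSpace X₁]
    [NormedAddCommGroup Y₁] [NormedSpace ℝ Y₁] [CompleteSpace Y₁]
    [NormedAddCommGroup X₂] [NormedSpace ℝ X₂] [CompleteSpace X₂]
    [NormedAddCommGroup Y₂] [NormedSpace ℝ Y₂] [CompleteSpace Y₂]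
    (F : X₁ × Y₂ → X₂) (G : X₁ × Y₂ → Y₁)
    (hF : ContDiff ℝ 1 F) (hG : ContDiff ℝ 1 G)
    (α α' lamu β : ℝ)
    (hα : 0 ≤ α) (hα'0 : 0 ≤ α') (hlamu : 0 ≤ lamu) (hβ : 0 ≤ β)
    (hαβ : α * β < 1) :
    -- (a): H satisfies the (A)(α; α′, λ_u) condition and Lip G(·,y) ≤ β for all y
    ((∀ p q : X₁ × Y₂,
        ‖p.1 - q.1‖ ≤ α * ‖G p - G q‖ →
          ‖F p - F q‖ ≤ α' * ‖p.2 - q.2‖ ∧ ‖G p - G q‖ ≤ lamu * ‖p.2 - q.2‖) ∧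
      ∀ (y : Y₂) (x x' : X₁), ‖G (x, y) - G (x', y)‖ ≤ β * ‖x - x'‖)
    ↔
    -- (b): the linearized conditions hold at every point
    (∀ p : X₁ × Y₂,
      (∀ (ξ : X₁) (η' : Y₂),
        ‖ξ‖ ≤ α * ‖fderiv ℝ G p (ξ, η')‖ →
          ‖fderiv ℝ F p (ξ, η')‖ ≤ α' * ‖η'‖ ∧
            ‖fderiv ℝ G p (ξ, η')‖ ≤ lamu * ‖η'‖) ∧
      ‖(fderiv ℝ G p).comp (ContinuousLinearMap.inl ℝ X₁ Y₂)‖ ≤ β) := by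
  have hGd : Differentiable ℝ G := hG.differentiable one_ne_zero
  have hFd : Differentiable ℝ F := hF.differentiable one_ne_zero
  have hGdc : Continuous (fun z => fderiv ℝ G z) := hG.continuous_fderiv one_ne_zero
  have hFdc : Continuous (fun z => fderiv ℝ F z) := hF.continuous_fderiv one_ne_zero
  have hpart : ∀ (z : X₁ × Y₂), HasFDerivAt (fun x => G (x, z.2))
      ((fderiv ℝ G z).comp (ContinuousLinearMap.inl ℝ X₁ Y₂)) z.1 := by
    intro z
    exact (hGd (z.1, z.2)).hasFDerivAt.comp z.1 (hasFDerivAt_prodMk_left z.1 z.2)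
  have hm : 𝓝[>] (0:ℝ) ≤ 𝓝[≠] (0:ℝ) := nhdsWithin_mono 0 fun x hx => ne_of_gt hx
  constructor
  · rintro ⟨ha1, ha2⟩ p
    have hinl : ‖(fderiv ℝ G p).comp (ContinuousLinearMap.inl ℝ X₁ Y₂)‖ ≤ β := by
      refine (hpart p).le_of_lip' hβ ?_
      exact Filter.Eventually.of_forall fun x => ha2 p.2 x p.1
    refine ⟨?_, hinl⟩
    intro ξ η' hcone
    have hD1 : ∀ ζ : X₁, ‖fderiv ℝ G p (ζ, (0:Y₂))‖ ≤ β * ‖ζ‖ := by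
      intro ζ
      have h2 : fderiv ℝ G p (ζ, (0:Y₂)) = ((fderiv ℝ G p).comp (inl ℝ X₁ Y₂)) ζ := by simp
      rw [h2]
      exact le_trans (ContinuousLinearMap.le_opNorm _ ζ)
        (mul_le_mul_of_nonneg_right hinl (norm_nonneg ζ))
    -- curves
    have hline : ∀ v : X₁ × Y₂, HasDerivAt (fun t : ℝ => p + t • v) v 0 := by
      intro v
      simpa using ((hasDerivAt_id (0:ℝ)).smul_const v).const_add p
    have hcurveG : ∀ v : X₁ × Y₂,
        HasDerivAt (fun t : ℝ => G (p + t • v)) (fderiv ℝ G p v) 0 := by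
      intro v
      have h0 : p + (0:ℝ) • v = p := by simp
      have := (hGd (p + (0:ℝ) • v)).hasFDerivAt.comp_hasDerivAt 0 (hline v)
      rwa [h0] at this
    have hcurveF : ∀ v : X₁ × Y₂,
        HasDerivAt (fun t : ℝ => F (p + t • v)) (fderiv ℝ F p v) 0 := by
      intro v
      have h0 : p + (0:ℝ) • v = p := by simp
      have := (hFd (p + (0:ℝ) • v)).hasFDerivAt.comp_hasDerivAt 0 (hline v)
      rwa [h0] at this
    have hslope : ∀ (H : X₁ × Y₂ → Y₁) (v : X₁ × Y₂) (t : ℝ), 0 < t →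
        ‖slope (fun u : ℝ => H (p + u • v)) 0 t‖ = t⁻¹ * ‖H (p + t • v) - H p‖ := by
      intro H v t ht
      rw [slope_def_module]
      simp [norm_smul, abs_of_pos ht]
    have hslopeF : ∀ (v : X₁ × Y₂) (t : ℝ), 0 < t →
        ‖slope (fun u : ℝ => F (p + u • v)) 0 t‖ = t⁻¹ * ‖F (p + t • v) - F p‖ := by
      intro v t ht
      rw [slope_def_module]
      simp [norm_smul, abs_of_pos ht]
    -- the key limiting lemma
    have key : ∀ w : X₁,
        (∀ᶠ t in 𝓝[>] (0:ℝ), ‖t • w‖ ≤ α * ‖G (p + t • ((w, η') : X₁ × Y₂)) - G p‖) →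
        ‖fderiv ℝ F p ((w, η') : X₁ × Y₂)‖ ≤ α' * ‖η'‖ ∧
          ‖fderiv ℝ G p ((w, η') : X₁ × Y₂)‖ ≤ lamu * ‖η'‖ := by
      intro w hev
      set v : X₁ × Y₂ := (w, η') with hv
      have hsG := ((hasDerivAt_iff_tendsto_slope.mp (hcurveG v)).mono_left hm).norm
      have hsF := ((hasDerivAt_iff_tendsto_slope.mp (hcurveF v)).mono_left hm).norm
      have hevc : ∀ᶠ t in 𝓝[>] (0:ℝ),
          ‖slope (fun u : ℝ => F (p + u • v)) 0 t‖ ≤ α' * ‖η'‖ ∧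
          ‖slope (fun u : ℝ => G (p + u • v)) 0 t‖ ≤ lamu * ‖η'‖ := by
        filter_upwards [hev, self_mem_nhdsWithin] with t ht ht0
        have ht0' : (0:ℝ) < t := ht0
        have h1 : (p + t • v).1 - p.1 = t • w := by simp [hv]
        have h2 : (p + t • v).2 - p.2 = t • η' := by simp [hv]
        have hpair := ha1 (p + t • v) p (by rw [h1]; exact ht)
        rw [h2] at hpair
        have hnt : ‖t • η'‖ = t * ‖η'‖ := by
          rw [norm_smul, Real.norm_eq_abs, abs_of_pos ht0']
        constructor
        · rw [hslopeF v t ht0']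
          rw [inv_mul_le_iff₀ ht0']
          calc ‖F (p + t • v) - F p‖ ≤ α' * ‖t • η'‖ := hpair.1
            _ = t * (α' * ‖η'‖) := by rw [hnt]; ring
        · rw [hslope G v t ht0']
          rw [inv_mul_le_iff₀ ht0']
          calc ‖G (p + t • v) - G p‖ ≤ lamu * ‖t • η'‖ := hpair.2
            _ = t * (lamu * ‖η'‖) := by rw [hnt]; ring
      constructor
      · exact le_of_tendsto hsF (hevc.mono fun t h => h.1)
      · exact le_of_tendsto hsG (hevc.mono fun t h => h.2)
    by_cases hξ : ξ = 0
    · subst hξ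
      apply key 0
      filter_upwards with t
      rw [smul_zero, norm_zero]
      positivity
    · have hξ0 : 0 < ‖ξ‖ := norm_pos_iff.mpr hξ
      have hmain : ∀ s : ℝ, 0 ≤ s → s < 1 →
          ‖fderiv ℝ F p ((s • ξ, η') : X₁ × Y₂)‖ ≤ α' * ‖η'‖ ∧
          ‖fderiv ℝ G p ((s • ξ, η') : X₁ × Y₂)‖ ≤ lamu * ‖η'‖ := by
        intro s hs0 hs1
        apply key (s • ξ)
        have hsplit : ((s • ξ, η') : X₁ × Y₂) + (((1-s) • ξ, (0:Y₂)) : X₁ × Y₂) = (ξ, η') := by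
          rw [Prod.mk_add_mk, ← add_smul, add_zero]
          norm_num
        have h1 : ‖fderiv ℝ G p (((1-s) • ξ, (0:Y₂)) : X₁ × Y₂)‖ ≤ β * ((1-s) * ‖ξ‖) := by
          have := hD1 ((1-s) • ξ)
          rwa [norm_smul, Real.norm_eq_abs, abs_of_nonneg (by linarith : (0:ℝ) ≤ 1 - s)] at this
        have h2 : ‖fderiv ℝ G p ((ξ, η') : X₁ × Y₂)‖
            ≤ ‖fderiv ℝ G p ((s • ξ, η') : X₁ × Y₂)‖ + β * ((1-s) * ‖ξ‖) := by
          calc ‖fderiv ℝ G p ((ξ, η') : X₁ × Y₂)‖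
              = ‖fderiv ℝ G p ((s • ξ, η') : X₁ × Y₂) + fderiv ℝ G p (((1-s) • ξ, (0:Y₂)) : X₁ × Y₂)‖ := by
                rw [← map_add, hsplit]
            _ ≤ _ := le_trans (norm_add_le _ _) (by linarith)
        have hmargin : s * ‖ξ‖ < α * ‖fderiv ℝ G p ((s • ξ, η') : X₁ × Y₂)‖ := by
          have h3 := mul_le_mul_of_nonneg_left h2 hα
          nlinarith [mul_pos (mul_pos (sub_pos.2 hs1) (sub_pos.2 hαβ)) hξ0]
        have ht : Tendsto (fun t : ℝ => α * ‖slope (fun u : ℝ => G (p + u • ((s • ξ, η') : X₁ × Y₂))) 0 t‖)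
            (𝓝[>] (0:ℝ)) (𝓝 (α * ‖fderiv ℝ G p ((s • ξ, η') : X₁ × Y₂)‖)) :=
          (((hasDerivAt_iff_tendsto_slope.mp (hcurveG _)).mono_left hm).norm).const_mul α
        filter_upwards [ht.eventually_const_lt hmargin, self_mem_nhdsWithin] with t hlt ht0
        have ht0' : (0:ℝ) < t := ht0
        rw [hslope G _ t ht0'] at hlt
        have hns : ‖t • (s • ξ)‖ = t * (s * ‖ξ‖) := by
          rw [norm_smul, norm_smul, Real.norm_eq_abs, Real.norm_eq_abs,
            abs_of_pos ht0', abs_of_nonneg hs0]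
        rw [hns]
        calc t * (s * ‖ξ‖) ≤ t * (α * (t⁻¹ * ‖G (p + t • ((s • ξ, η') : X₁ × Y₂)) - G p‖)) :=
              mul_le_mul_of_nonneg_left hlt.le ht0'.le
          _ = α * ‖G (p + t • ((s • ξ, η') : X₁ × Y₂)) - G p‖ := by
              field_simp
      -- pass to the limit s → 1
      have hsplit' : ∀ s : ℝ, ((s • ξ, η') : X₁ × Y₂) + (((1-s) • ξ, (0:Y₂)) : X₁ × Y₂) = (ξ, η') := by
        intro s
        rw [Prod.mk_add_mk, ← add_smul, add_zero]
        norm_num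
      have hbound : ∀ (T : (X₁ × Y₂) →L[ℝ] X₂) (c : ℝ), 0 ≤ c → c < 1 →
          ‖T ((ξ, η') : X₁ × Y₂)‖ ≤ ‖T ((c • ξ, η') : X₁ × Y₂)‖ + (1-c) * ‖T ((ξ, (0:Y₂)) : X₁ × Y₂)‖ := by
        intro T c hc0 hc1
        have h1 : T ((ξ, η') : X₁ × Y₂) = T ((c • ξ, η') : X₁ × Y₂) + T (((1-c) • ξ, (0:Y₂)) : X₁ × Y₂) := by
          rw [← map_add, hsplit' c]
        have h2 : T (((1-c) • ξ, (0:Y₂)) : X₁ × Y₂) = (1-c) • T ((ξ, (0:Y₂)) : X₁ × Y₂) := by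
          rw [← map_smul]
          congr 1
          rw [Prod.smul_mk, smul_zero]
        rw [h1, h2]
        refine le_trans (norm_add_le _ _) ?_
        rw [norm_smul, Real.norm_eq_abs, abs_of_nonneg (by linarith : (0:ℝ) ≤ 1 - c)]
      have hboundG : ∀ (T : (X₁ × Y₂) →L[ℝ] Y₁) (c : ℝ), 0 ≤ c → c < 1 →
          ‖T ((ξ, η') : X₁ × Y₂)‖ ≤ ‖T ((c • ξ, η') : X₁ × Y₂)‖ + (1-c) * ‖T ((ξ, (0:Y₂)) : X₁ × Y₂)‖ := by
        intro T c hc0 hc1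
        have h1 : T ((ξ, η') : X₁ × Y₂) = T ((c • ξ, η') : X₁ × Y₂) + T (((1-c) • ξ, (0:Y₂)) : X₁ × Y₂) := by
          rw [← map_add, hsplit' c]
        have h2 : T (((1-c) • ξ, (0:Y₂)) : X₁ × Y₂) = (1-c) • T ((ξ, (0:Y₂)) : X₁ × Y₂) := by
          rw [← map_smul]
          congr 1
          rw [Prod.smul_mk, smul_zero]
        rw [h1, h2]
        refine le_trans (norm_add_le _ _) ?_
        rw [norm_smul, Real.norm_eq_abs, abs_of_nonneg (by linarith : (0:ℝ) ≤ 1 - c)]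
      have hchoose : ∀ C : ℝ, 0 ≤ C → ∀ ε : ℝ, 0 < ε → ∃ s : ℝ, 0 ≤ s ∧ s < 1 ∧ (1-s) * C ≤ ε := by
        intro C hC ε hε
        refine ⟨max 0 (1 - ε / (C+1)), le_max_left _ _, ?_, ?_⟩
        · apply max_lt one_pos
          have : 0 < ε / (C+1) := by positivity
          linarith
        · have h1 : 1 - max 0 (1 - ε / (C+1)) ≤ ε / (C+1) := by
            have := le_max_right 0 (1 - ε / (C+1))
            linarith
          have h2 : (1 - max 0 (1 - ε / (C+1))) * C ≤ (ε / (C+1)) * C := by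
            apply mul_le_mul_of_nonneg_right h1 hC
          refine le_trans h2 ?_
          rw [div_mul_eq_mul_div, div_le_iff₀ (by positivity : (0:ℝ) < C + 1)]
          nlinarith
      constructor
      · apply le_of_forall_pos_le_add
        intro ε hε
        obtain ⟨s, hs0, hs1, hsC⟩ := hchoose ‖fderiv ℝ F p ((ξ, (0:Y₂)) : X₁ × Y₂)‖ (norm_nonneg _) ε hε
        calc ‖fderiv ℝ F p ((ξ, η') : X₁ × Y₂)‖
            ≤ ‖fderiv ℝ F p ((s • ξ, η') : X₁ × Y₂)‖ + (1-s) * ‖fderiv ℝ F p ((ξ, (0:Y₂)) : X₁ × Y₂)‖ :=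
              hbound _ s hs0 hs1
          _ ≤ α' * ‖η'‖ + ε := add_le_add ((hmain s hs0 hs1).1) hsC
      · apply le_of_forall_pos_le_add
        intro ε hε
        obtain ⟨s, hs0, hs1, hsC⟩ := hchoose ‖fderiv ℝ G p ((ξ, (0:Y₂)) : X₁ × Y₂)‖ (norm_nonneg _) ε hε
        calc ‖fderiv ℝ G p ((ξ, η') : X₁ × Y₂)‖
            ≤ ‖fderiv ℝ G p ((s • ξ, η') : X₁ × Y₂)‖ + (1-s) * ‖fderiv ℝ G p ((ξ, (0:Y₂)) : X₁ × Y₂)‖ :=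
              hboundG _ s hs0 hs1
          _ ≤ lamu * ‖η'‖ + ε := add_le_add ((hmain s hs0 hs1).2) hsC
  · intro hb
    have hD1 : ∀ (z : X₁ × Y₂) (ζ : X₁), ‖fderiv ℝ G z (ζ, (0:Y₂))‖ ≤ β * ‖ζ‖ := by
      intro z ζ
      have h2 : fderiv ℝ G z (ζ, (0:Y₂)) = ((fderiv ℝ G z).comp (inl ℝ X₁ Y₂)) ζ := by simp
      rw [h2]
      exact le_trans (ContinuousLinearMap.le_opNorm _ ζ)
        (mul_le_mul_of_nonneg_right (hb z).2 (norm_nonneg ζ))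
    have hD2G : ∀ (z : X₁ × Y₂) (w : Y₂), ‖fderiv ℝ G z ((0:X₁), w)‖ ≤ lamu * ‖w‖ := by
      intro z w
      refine ((hb z).1 0 w ?_).2
      rw [norm_zero]
      positivity
    have hD2F : ∀ (z : X₁ × Y₂) (w : Y₂), ‖fderiv ℝ F z ((0:X₁), w)‖ ≤ α' * ‖w‖ := by
      intro z w
      refine ((hb z).1 0 w ?_).1
      rw [norm_zero]
      positivity
    -- Lipschitz continuity of G in the first variable
    have hLip : ∀ (y : Y₂) (x x' : X₁), ‖G (x, y) - G (x', y)‖ ≤ β * ‖x - x'‖ := by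
      intro y x x'
      have hdiff : ∀ u ∈ (univ : Set X₁), DifferentiableAt ℝ (fun w : X₁ => G (w, y)) u :=
        fun u _ => (hpart (u, y)).differentiableAt
      have hbd : ∀ u ∈ (univ : Set X₁), ‖fderiv ℝ (fun w : X₁ => G (w, y)) u‖ ≤ β := by
        intro u _
        rw [(hpart (u, y)).fderiv]
        exact (hb (u, y)).2
      exact convex_univ.norm_image_sub_le_of_norm_fderiv_le hdiff hbd (mem_univ x') (mem_univ x)
    refine ⟨?_, hLip⟩
    intro p q hyp
    -- the vertical curve case: p.1 = q.1
    have hvert : ∀ x : X₁, ∀ y y' : Y₂,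
        ‖G (x, y) - G (x, y')‖ ≤ lamu * ‖y - y'‖ ∧ ‖F (x, y) - F (x, y')‖ ≤ α' * ‖y - y'‖ := by
      intro x y y'
      have hc : ∀ t : ℝ, HasDerivAt (fun u : ℝ => ((x, y' + u • (y - y')) : X₁ × Y₂))
          ((0:X₁), y - y') t := by
        intro t
        have h1 : HasDerivAt (fun u : ℝ => y' + u • (y - y')) (y - y') t := by
          simpa using ((hasDerivAt_id t).smul_const (y - y')).const_add y'
        have h2 : HasDerivAt (fun _ : ℝ => x) (0:X₁) t := hasDerivAt_const t x
        exact h2.prodMk h1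
      have hGc : ∀ t ∈ Icc (0:ℝ) 1, HasDerivWithinAt (fun u : ℝ => G (x, y' + u • (y - y')))
          (fderiv ℝ G ((x, y' + t • (y - y')) : X₁ × Y₂) ((0:X₁), y - y')) (Icc 0 1) t := by
        intro t _
        exact (((hGd _).hasFDerivAt.comp_hasDerivAt t (hc t))).hasDerivWithinAt
      have hFc : ∀ t ∈ Icc (0:ℝ) 1, HasDerivWithinAt (fun u : ℝ => F (x, y' + u • (y - y')))
          (fderiv ℝ F ((x, y' + t • (y - y')) : X₁ × Y₂) ((0:X₁), y - y')) (Icc 0 1) t := by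
        intro t _
        exact (((hFd _).hasFDerivAt.comp_hasDerivAt t (hc t))).hasDerivWithinAt
      have hG1 := norm_image_sub_le_of_norm_deriv_le_segment_01' hGc
        (fun t _ => hD2G _ (y - y'))
      have hF1 := norm_image_sub_le_of_norm_deriv_le_segment_01' hFc
        (fun t _ => hD2F _ (y - y'))
      simp only [one_smul, zero_smul, add_zero, add_sub_cancel] at hG1 hF1
      exact ⟨hG1, hF1⟩
    by_cases hξ : p.1 - q.1 = 0
    · have hx : p.1 = q.1 := sub_eq_zero.mp hξ
      have := hvert q.1 p.2 q.2
      constructor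
      · have h := this.2
        rwa [← hx, show ((p.1, p.2) : X₁ × Y₂) = p from rfl,
          show ((p.1, q.2) : X₁ × Y₂) = q by rw [hx]] at h
      · have h := this.1
        rwa [← hx, show ((p.1, p.2) : X₁ × Y₂) = p from rfl,
          show ((p.1, q.2) : X₁ × Y₂) = q by rw [hx]] at h
    · by_cases hη : p.2 - q.2 = 0
      · exfalso
        have hy : p.2 = q.2 := sub_eq_zero.mp hη
        have h1 : ‖G p - G q‖ ≤ β * ‖p.1 - q.1‖ := by
          have := hLip p.2 p.1 q.1
          rwa [show ((p.1, p.2) : X₁ × Y₂) = p from rfl,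
            show ((q.1, p.2) : X₁ × Y₂) = q by rw [hy]] at this
        have hξ0 : 0 < ‖p.1 - q.1‖ := norm_pos_iff.mpr hξ
        nlinarith [mul_le_mul_of_nonneg_left h1 hα]
      · -- main case : marching along an adapted polygonal path
        set ξ : X₁ := p.1 - q.1 with hξdef
        set η' : Y₂ := p.2 - q.2 with hηdef
        have hξ0 : 0 < ‖ξ‖ := norm_pos_iff.mpr hξ
        have hη0 : 0 < ‖η'‖ := norm_pos_iff.mpr hη
        have hα0 : 0 < α := by
          rcases lt_or_ge 0 α with h | h
          · exact h
          · exfalso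
            have : α * ‖G p - G q‖ ≤ 0 :=
              mul_nonpos_of_nonpos_of_nonneg h (norm_nonneg _)
            nlinarith
        have h1αβ : 0 < 1 - α * β := by linarith
        set z : ℝ → ℝ → X₁ × Y₂ := fun a t => (q.1 + a • ξ, q.2 + t • η') with hzdef
        set K : Set (X₁ × Y₂) := (segment ℝ q.1 p.1) ×ˢ (segment ℝ q.2 p.2) with hKdef
        have hKcomp : IsCompact K := by
          have h1 : IsCompact (segment ℝ q.1 p.1) := by
            rw [segment_eq_image']
            exact isCompact_Icc.image (by fun_prop)
          have h2 : IsCompact (segment ℝ q.2 p.2) := by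
            rw [segment_eq_image']
            exact isCompact_Icc.image (by fun_prop)
          exact h1.prod h2
        have hKconv : Convex ℝ K := (convex_segment _ _).prod (convex_segment _ _)
        have hzmem : ∀ a t : ℝ, a ∈ Icc (0:ℝ) 1 → t ∈ Icc (0:ℝ) 1 → z a t ∈ K := by
          intro a t ha ht
          constructor
          · rw [segment_eq_image']
            exact ⟨a, ha, rfl⟩
          · rw [segment_eq_image']
            exact ⟨t, ht, rfl⟩
        set S : ℝ := α * (lamu * ‖η'‖) / ((1 - α * β) * ‖ξ‖) with hSdef
        have hS0 : 0 ≤ S := by positivity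
        set L : ℝ := S * ‖ξ‖ + ‖η'‖ with hLdef
        have hL0 : 0 < L := by positivity
        -- bound for ‖fderiv F‖ on K
        obtain ⟨M0, hM0⟩ := hKcomp.exists_bound_of_continuousOn hFdc.continuousOn
        set M : ℝ := max M0 0 with hMdef
        have hM : 0 ≤ M := le_max_right _ _
        have hFLip : ∀ w ∈ K, ∀ w' ∈ K, ‖F w - F w'‖ ≤ M * ‖w - w'‖ := by
          intro w hw w' hw'
          exact Convex.norm_image_sub_le_of_norm_fderiv_le (fun u _ => hFd u)
            (fun u hu => le_trans (hM0 u hu) (le_max_left _ _)) hKconv hw' hw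
        -- uniform continuity of the derivatives on K
        have hUC : ∀ ε : ℝ, 0 < ε → ∃ δ : ℝ, 0 < δ ∧ ∀ w ∈ K, ∀ w' ∈ K, dist w w' < δ →
            ‖fderiv ℝ G w - fderiv ℝ G w'‖ < ε ∧ ‖fderiv ℝ F w - fderiv ℝ F w'‖ < ε := by
          intro ε hε
          have h1 := (Metric.uniformContinuousOn_iff.mp
            (hKcomp.uniformContinuousOn_of_continuous hGdc.continuousOn)) ε hε
          have h2 := (Metric.uniformContinuousOn_iff.mp
            (hKcomp.uniformContinuousOn_of_continuous hFdc.continuousOn)) ε hε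
          obtain ⟨δ₁, hδ₁, hG1⟩ := h1
          obtain ⟨δ₂, hδ₂, hF1⟩ := h2
          refine ⟨min δ₁ δ₂, lt_min hδ₁ hδ₂, fun w hw w' hw' hd => ⟨?_, ?_⟩⟩
          · rw [← dist_eq_norm]
            exact hG1 w hw w' hw' (hd.trans_le (min_le_left _ _))
          · rw [← dist_eq_norm]
            exact hF1 w hw w' hw' (hd.trans_le (min_le_right _ _))
        -- root existence
        have hroot : ∀ a t : ℝ, ∃ s : ℝ, 0 ≤ s ∧ s ≤ S ∧
            α * ‖fderiv ℝ G (z a t) ((s • ξ, η') : X₁ × Y₂)‖ = s * ‖ξ‖ := by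
          intro a t
          set h : ℝ → ℝ := fun s => α * ‖fderiv ℝ G (z a t) ((s • ξ, η') : X₁ × Y₂)‖ - s * ‖ξ‖
            with hhdef
          have hcont : Continuous h := by
            apply Continuous.sub ?_ (by fun_prop)
            apply Continuous.mul continuous_const
            apply Continuous.norm
            exact (fderiv ℝ G (z a t)).continuous.comp (by fun_prop)
          have hh0 : 0 ≤ h 0 := by
            have : h 0 = α * ‖fderiv ℝ G (z a t) (((0:ℝ) • ξ, η') : X₁ × Y₂)‖ := by
              simp [hhdef]
            rw [this]
            positivity
          have hsplit : ∀ s : ℝ, ((s • ξ, η') : X₁ × Y₂) = ((s • ξ, (0:Y₂)) : X₁ × Y₂) + (((0:X₁), η') : X₁ × Y₂) := by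
            intro s
            rw [Prod.mk_add_mk, add_zero, zero_add]
          have hupper : ∀ s : ℝ, 0 ≤ s →
              ‖fderiv ℝ G (z a t) ((s • ξ, η') : X₁ × Y₂)‖ ≤ β * (s * ‖ξ‖) + lamu * ‖η'‖ := by
            intro s hs
            rw [hsplit s, map_add]
            refine le_trans (norm_add_le _ _) (add_le_add ?_ (hD2G _ _))
            have := hD1 (z a t) (s • ξ)
            rwa [norm_smul, Real.norm_eq_abs, abs_of_nonneg hs] at this
          have hhS : h S ≤ 0 := by
            have h1 := hupper S hS0
            have h2 : S * ‖ξ‖ * (1 - α * β) = α * (lamu * ‖η'‖) := by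
              rw [hSdef]
              field_simp
            have := mul_le_mul_of_nonneg_left h1 hα
            simp only [hhdef]
            nlinarith
          have := intermediate_value_Icc' hS0 hcont.continuousOn
          obtain ⟨s, hsmem, hs⟩ := this ⟨hhS, hh0⟩
          exact ⟨s, hsmem.1, hsmem.2, by simp only [hhdef] at hs; linarith⟩
        choose r hr0 hrS hreq using hroot
        -- monotonicity below the root
        have hmono : ∀ a t c : ℝ, 0 ≤ c → c ≤ r a t →
            c * ‖ξ‖ ≤ α * ‖fderiv ℝ G (z a t) ((c • ξ, η') : X₁ × Y₂)‖ := by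
          intro a t c hc0 hcr
          have hsplit : ((r a t • ξ, η') : X₁ × Y₂)
              = ((c • ξ, η') : X₁ × Y₂) + (((r a t - c) • ξ, (0:Y₂)) : X₁ × Y₂) := by
            rw [Prod.mk_add_mk, ← add_smul, add_zero]
            congr 2
            ring
          have h1 : ‖fderiv ℝ G (z a t) (((r a t - c) • ξ, (0:Y₂)) : X₁ × Y₂)‖
              ≤ β * ((r a t - c) * ‖ξ‖) := by
            have := hD1 (z a t) ((r a t - c) • ξ)
            rwa [norm_smul, Real.norm_eq_abs, abs_of_nonneg (by linarith)] at this
          have h2 : ‖fderiv ℝ G (z a t) ((r a t • ξ, η') : X₁ × Y₂)‖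
              ≤ ‖fderiv ℝ G (z a t) ((c • ξ, η') : X₁ × Y₂)‖ + β * ((r a t - c) * ‖ξ‖) := by
            rw [hsplit, map_add]
            exact le_trans (norm_add_le _ _) (by linarith)
          have h3 := hreq a t
          have h4 := mul_le_mul_of_nonneg_left h2 hα
          nlinarith [mul_nonneg (mul_nonneg (sub_nonneg.2 hcr) (norm_nonneg ξ)) h1αβ.le]
        -- reduce to an ε-version
        suffices hgoal : ∀ ε : ℝ, 0 < ε →
            ‖F p - F q‖ ≤ α' * ‖η'‖ + ε ∧ ‖G p - G q‖ ≤ lamu * ‖η'‖ + ε by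
          exact ⟨le_of_forall_pos_le_add fun ε hε => (hgoal ε hε).1,
            le_of_forall_pos_le_add fun ε hε => (hgoal ε hε).2⟩
        intro ε hε
        set C₂ : ℝ := L + α * L * (M + β) / (1 - α * β) + 1 with hC₂def
        have hC₂ : 0 < C₂ := by positivity
        set ε₁ : ℝ := ε / C₂ with hε₁def
        have hε₁ : 0 < ε₁ := by positivity
        obtain ⟨δ, hδ0, hδ⟩ := hUC ε₁ hε₁
        obtain ⟨n, hn⟩ := exists_nat_gt (L / δ)
        have hnpos : 0 < (n:ℝ) := lt_of_le_of_lt (by positivity) hn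
        have hn0 : (n:ℝ) ≠ 0 := ne_of_gt hnpos
        have hstep : L / n < δ := by
          rw [div_lt_iff₀ hnpos]
          rw [div_lt_iff₀ hδ0] at hn
          linarith
        set a : ℕ → ℝ := fun k => Nat.rec (0:ℝ) (fun k ak => min 1 (ak + r ak ((k:ℝ)/n) / n)) k
          with hadef
        have ha0 : a 0 = 0 := rfl
        have haS : ∀ k, a (k+1) = min 1 (a k + r (a k) ((k:ℝ)/n) / n) := fun k => rfl
        have hab : ∀ k, 0 ≤ a k ∧ a k ≤ 1 := by
          intro k
          induction k with
          | zero => exact ⟨le_refl 0, zero_le_one⟩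
          | succ k ih =>
            rw [haS k]
            exact ⟨le_min zero_le_one
              (add_nonneg ih.1 (div_nonneg (hr0 _ _) hnpos.le)), min_le_left _ _⟩
        have hamono : Monotone a := by
          apply monotone_nat_of_le_succ
          intro k
          rw [haS k]
          exact le_min (hab k).2 (le_add_of_nonneg_right (div_nonneg (hr0 _ _) hnpos.le))
        have hzkK : ∀ k : ℕ, k ≤ n → z (a k) ((k:ℝ)/n) ∈ K := by
          intro k hk
          refine hzmem _ _ ⟨(hab k).1, (hab k).2⟩ ⟨by positivity, ?_⟩
          rw [div_le_one hnpos]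
          exact_mod_cast hk
        -- the per-step estimate
        have hker : ∀ k : ℕ, k < n →
            (‖G (z (a (k+1)) (((k:ℝ)+1)/n)) - G (z (a k) ((k:ℝ)/n))‖
                ≤ lamu * ‖η'‖ / n + ε₁ * (L / n)
              ∧ ‖F (z (a (k+1)) (((k:ℝ)+1)/n)) - F (z (a k) ((k:ℝ)/n))‖
                ≤ α' * ‖η'‖ / n + ε₁ * (L / n))
            ∧ (a n < 1 → ‖G (z (a (k+1)) (((k:ℝ)+1)/n)) - G (z (a k) ((k:ℝ)/n))‖
                ≤ (a (k+1) - a k) * ‖ξ‖ / α + ε₁ * (L / n)) := by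
          intro k hk
          have hk1 : k + 1 ≤ n := Nat.succ_le_of_lt hk
          have hzk : z (a k) ((k:ℝ)/n) ∈ K := hzkK k hk.le
          have hzk1 : z (a (k+1)) (((k:ℝ)+1)/n) ∈ K := by
            have := hzkK (k+1) hk1
            rwa [show (((k+1:ℕ)):ℝ) = (k:ℝ)+1 by push_cast; ring] at this
          have hδa0 : 0 ≤ a (k+1) - a k := sub_nonneg.2 (hamono (Nat.le_succ k))
          have hδa : a (k+1) - a k ≤ r (a k) ((k:ℝ)/n) / n := by
            have := min_le_right 1 (a k + r (a k) ((k:ℝ)/n) / n)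
            rw [← haS k] at this
            linarith
          have hc0 : 0 ≤ (n:ℝ) * (a (k+1) - a k) := by positivity
          have hcr : (n:ℝ) * (a (k+1) - a k) ≤ r (a k) ((k:ℝ)/n) := by
            rw [mul_comm]
            exact (le_div_iff₀ hnpos).mp hδa
          have hvdiff : z (a (k+1)) (((k:ℝ)+1)/n) - z (a k) ((k:ℝ)/n)
              = (((a (k+1) - a k) • ξ, ((1:ℝ)/n) • η') : X₁ × Y₂) := by
            simp only [hzdef]
            rw [Prod.mk_sub_mk]
            congr 1
            · rw [add_sub_add_left_eq_sub, ← sub_smul]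
            · rw [add_sub_add_left_eq_sub, ← sub_smul]
              congr 1
              rw [div_sub_div_same]
              norm_num
          have hsmul : ((1:ℝ)/n) • (((((n:ℝ) * (a (k+1) - a k)) • ξ, η')) : X₁ × Y₂)
              = (((a (k+1) - a k) • ξ, ((1:ℝ)/n) • η') : X₁ × Y₂) := by
            rw [Prod.smul_mk, smul_smul]
            congr 2
            field_simp
          have hDGlin : fderiv ℝ G (z (a k) ((k:ℝ)/n)) (z (a (k+1)) (((k:ℝ)+1)/n) - z (a k) ((k:ℝ)/n))
              = ((1:ℝ)/n) • fderiv ℝ G (z (a k) ((k:ℝ)/n)) (((((n:ℝ) * (a (k+1) - a k)) • ξ, η')) : X₁ × Y₂) := by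
            rw [hvdiff, ← hsmul, map_smul]
          have hDFlin : fderiv ℝ F (z (a k) ((k:ℝ)/n)) (z (a (k+1)) (((k:ℝ)+1)/n) - z (a k) ((k:ℝ)/n))
              = ((1:ℝ)/n) • fderiv ℝ F (z (a k) ((k:ℝ)/n)) (((((n:ℝ) * (a (k+1) - a k)) • ξ, η')) : X₁ × Y₂) := by
            rw [hvdiff, ← hsmul, map_smul]
          have hconek : ‖(((n:ℝ) * (a (k+1) - a k)) • ξ : X₁)‖
              ≤ α * ‖fderiv ℝ G (z (a k) ((k:ℝ)/n)) (((((n:ℝ) * (a (k+1) - a k)) • ξ, η')) : X₁ × Y₂)‖ := by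
            rw [norm_smul, Real.norm_eq_abs, abs_of_nonneg hc0]
            exact hmono _ _ _ hc0 hcr
          obtain ⟨hFk, hGk⟩ := (hb _).1 _ η' hconek
          have hnormv : ‖z (a (k+1)) (((k:ℝ)+1)/n) - z (a k) ((k:ℝ)/n)‖ ≤ L / n := by
            rw [hvdiff]
            have hnd : ‖(((a (k+1) - a k) • ξ, ((1:ℝ)/n) • η') : X₁ × Y₂)‖
                = max ‖(a (k+1) - a k) • ξ‖ ‖((1:ℝ)/n) • η'‖ := rfl
            rw [hnd]
            apply max_le
            · rw [norm_smul, Real.norm_eq_abs, abs_of_nonneg hδa0]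
              have h1 : a (k+1) - a k ≤ S / n :=
                hδa.trans ((div_le_div_iff_of_pos_right hnpos).mpr (hrS _ _))
              calc (a (k+1) - a k) * ‖ξ‖ ≤ (S/n) * ‖ξ‖ :=
                    mul_le_mul_of_nonneg_right h1 (norm_nonneg _)
                _ = S * ‖ξ‖ / n := by ring
                _ ≤ L / n := by
                    apply (div_le_div_iff_of_pos_right hnpos).mpr
                    rw [hLdef]
                    linarith [norm_nonneg η']
            · rw [norm_smul, Real.norm_eq_abs,
                abs_of_nonneg (by positivity : (0:ℝ) ≤ 1/(n:ℝ))]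
              calc (1/(n:ℝ)) * ‖η'‖ = ‖η'‖ / n := by ring
                _ ≤ L / n := by
                    apply (div_le_div_iff_of_pos_right hnpos).mpr
                    rw [hLdef]
                    nlinarith [mul_nonneg hS0 (norm_nonneg ξ)]
          have hdistb : ∀ w ∈ segment ℝ (z (a k) ((k:ℝ)/n)) (z (a (k+1)) (((k:ℝ)+1)/n)),
              ‖fderiv ℝ G w - fderiv ℝ G (z (a k) ((k:ℝ)/n))‖ ≤ ε₁
              ∧ ‖fderiv ℝ F w - fderiv ℝ F (z (a k) ((k:ℝ)/n))‖ ≤ ε₁ := by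
            intro w hw
            have hwK : w ∈ K := hKconv.segment_subset hzk hzk1 hw
            have hdlt : dist w (z (a k) ((k:ℝ)/n)) < δ := by
              rw [segment_eq_image'] at hw
              obtain ⟨θ, hθ, rfl⟩ := hw
              rw [dist_eq_norm, add_sub_cancel_left, norm_smul, Real.norm_eq_abs,
                abs_of_nonneg hθ.1]
              calc θ * ‖z (a (k+1)) (((k:ℝ)+1)/n) - z (a k) ((k:ℝ)/n)‖
                  ≤ 1 * ‖z (a (k+1)) (((k:ℝ)+1)/n) - z (a k) ((k:ℝ)/n)‖ :=
                    mul_le_mul_of_nonneg_right hθ.2 (norm_nonneg _)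
                _ = ‖z (a (k+1)) (((k:ℝ)+1)/n) - z (a k) ((k:ℝ)/n)‖ := one_mul _
                _ ≤ L / n := hnormv
                _ < δ := hstep
            exact ⟨(hδ w hwK _ hzk hdlt).1.le, (hδ w hwK _ hzk hdlt).2.le⟩
          have happroxG : ‖G (z (a (k+1)) (((k:ℝ)+1)/n)) - G (z (a k) ((k:ℝ)/n))
              - fderiv ℝ G (z (a k) ((k:ℝ)/n)) (z (a (k+1)) (((k:ℝ)+1)/n) - z (a k) ((k:ℝ)/n))‖
              ≤ ε₁ * ‖z (a (k+1)) (((k:ℝ)+1)/n) - z (a k) ((k:ℝ)/n)‖ :=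
            Convex.norm_image_sub_le_of_norm_fderiv_le' (fun u _ => hGd u)
              (fun u hu => (hdistb u hu).1) (convex_segment _ _)
              (left_mem_segment ℝ _ _) (right_mem_segment ℝ _ _)
          have happroxF : ‖F (z (a (k+1)) (((k:ℝ)+1)/n)) - F (z (a k) ((k:ℝ)/n))
              - fderiv ℝ F (z (a k) ((k:ℝ)/n)) (z (a (k+1)) (((k:ℝ)+1)/n) - z (a k) ((k:ℝ)/n))‖
              ≤ ε₁ * ‖z (a (k+1)) (((k:ℝ)+1)/n) - z (a k) ((k:ℝ)/n)‖ :=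
            Convex.norm_image_sub_le_of_norm_fderiv_le' (fun u _ => hFd u)
              (fun u hu => (hdistb u hu).2) (convex_segment _ _)
              (left_mem_segment ℝ _ _) (right_mem_segment ℝ _ _)
          have htriG : ‖G (z (a (k+1)) (((k:ℝ)+1)/n)) - G (z (a k) ((k:ℝ)/n))‖
              ≤ ‖fderiv ℝ G (z (a k) ((k:ℝ)/n)) (z (a (k+1)) (((k:ℝ)+1)/n) - z (a k) ((k:ℝ)/n))‖
                + ε₁ * (L / n) := by
            have h1 := norm_add_le
              (G (z (a (k+1)) (((k:ℝ)+1)/n)) - G (z (a k) ((k:ℝ)/n))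
                - fderiv ℝ G (z (a k) ((k:ℝ)/n)) (z (a (k+1)) (((k:ℝ)+1)/n) - z (a k) ((k:ℝ)/n)))
              (fderiv ℝ G (z (a k) ((k:ℝ)/n)) (z (a (k+1)) (((k:ℝ)+1)/n) - z (a k) ((k:ℝ)/n)))
            rw [sub_add_cancel] at h1
            have h2 : ε₁ * ‖z (a (k+1)) (((k:ℝ)+1)/n) - z (a k) ((k:ℝ)/n)‖ ≤ ε₁ * (L / n) :=
              mul_le_mul_of_nonneg_left hnormv hε₁.le
            linarith [happroxG]
          have htriF : ‖F (z (a (k+1)) (((k:ℝ)+1)/n)) - F (z (a k) ((k:ℝ)/n))‖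
              ≤ ‖fderiv ℝ F (z (a k) ((k:ℝ)/n)) (z (a (k+1)) (((k:ℝ)+1)/n) - z (a k) ((k:ℝ)/n))‖
                + ε₁ * (L / n) := by
            have h1 := norm_add_le
              (F (z (a (k+1)) (((k:ℝ)+1)/n)) - F (z (a k) ((k:ℝ)/n))
                - fderiv ℝ F (z (a k) ((k:ℝ)/n)) (z (a (k+1)) (((k:ℝ)+1)/n) - z (a k) ((k:ℝ)/n)))
              (fderiv ℝ F (z (a k) ((k:ℝ)/n)) (z (a (k+1)) (((k:ℝ)+1)/n) - z (a k) ((k:ℝ)/n)))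
            rw [sub_add_cancel] at h1
            have h2 : ε₁ * ‖z (a (k+1)) (((k:ℝ)+1)/n) - z (a k) ((k:ℝ)/n)‖ ≤ ε₁ * (L / n) :=
              mul_le_mul_of_nonneg_left hnormv hε₁.le
            linarith [happroxF]
          have hDGb : ‖fderiv ℝ G (z (a k) ((k:ℝ)/n)) (z (a (k+1)) (((k:ℝ)+1)/n) - z (a k) ((k:ℝ)/n))‖
              ≤ lamu * ‖η'‖ / n := by
            rw [hDGlin, norm_smul, Real.norm_eq_abs,
              abs_of_nonneg (by positivity : (0:ℝ) ≤ 1/(n:ℝ))]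
            calc (1/(n:ℝ)) * ‖fderiv ℝ G (z (a k) ((k:ℝ)/n)) (((((n:ℝ) * (a (k+1) - a k)) • ξ, η')) : X₁ × Y₂)‖
                ≤ (1/(n:ℝ)) * (lamu * ‖η'‖) :=
                  mul_le_mul_of_nonneg_left hGk (by positivity)
              _ = lamu * ‖η'‖ / n := by ring
          have hDFb : ‖fderiv ℝ F (z (a k) ((k:ℝ)/n)) (z (a (k+1)) (((k:ℝ)+1)/n) - z (a k) ((k:ℝ)/n))‖
              ≤ α' * ‖η'‖ / n := by
            rw [hDFlin, norm_smul, Real.norm_eq_abs,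
              abs_of_nonneg (by positivity : (0:ℝ) ≤ 1/(n:ℝ))]
            calc (1/(n:ℝ)) * ‖fderiv ℝ F (z (a k) ((k:ℝ)/n)) (((((n:ℝ) * (a (k+1) - a k)) • ξ, η')) : X₁ × Y₂)‖
                ≤ (1/(n:ℝ)) * (α' * ‖η'‖) :=
                  mul_le_mul_of_nonneg_left hFk (by positivity)
              _ = α' * ‖η'‖ / n := by ring
          refine ⟨⟨le_trans htriG (by linarith), le_trans htriF (by linarith)⟩, ?_⟩
          intro hless
          have hless' : a (k+1) < 1 := lt_of_le_of_lt (hamono hk1) hless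
          have heq : a (k+1) = a k + r (a k) ((k:ℝ)/n) / n := by
            rcases min_choice 1 (a k + r (a k) ((k:ℝ)/n) / n) with h | h
            · rw [haS k, h] at hless'
              exact absurd hless' (lt_irrefl 1)
            · rw [haS k, h]
          have hceq : (n:ℝ) * (a (k+1) - a k) = r (a k) ((k:ℝ)/n) := by
            rw [heq]
            field_simp
            ring
          have hDGeq : ‖fderiv ℝ G (z (a k) ((k:ℝ)/n)) (z (a (k+1)) (((k:ℝ)+1)/n) - z (a k) ((k:ℝ)/n))‖
              = (a (k+1) - a k) * ‖ξ‖ / α := by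
            rw [hDGlin, hceq, norm_smul, Real.norm_eq_abs,
              abs_of_nonneg (by positivity : (0:ℝ) ≤ 1/(n:ℝ))]
            have h6 : ‖fderiv ℝ G (z (a k) ((k:ℝ)/n)) ((r (a k) ((k:ℝ)/n) • ξ, η') : X₁ × Y₂)‖
                = r (a k) ((k:ℝ)/n) * ‖ξ‖ / α := by
              rw [eq_div_iff hα0.ne']
              have := hreq (a k) ((k:ℝ)/n)
              linarith
            rw [h6]
            have h7 : a (k+1) - a k = r (a k) ((k:ℝ)/n) / n := by rw [heq]; ring
            rw [h7]
            field_simp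
          rw [hDGeq] at htriG
          exact htriG
        -- cumulative estimates
        have hzq : z (a 0) (((0:ℕ):ℝ)/n) = q := by
          rw [ha0]
          simp only [hzdef, Nat.cast_zero, zero_div, zero_smul, add_zero]
        have hcum : ∀ m : ℕ, m ≤ n →
            ‖G (z (a m) ((m:ℝ)/n)) - G q‖ ≤ m * (lamu * ‖η'‖ / n + ε₁ * (L/n))
            ∧ ‖F (z (a m) ((m:ℝ)/n)) - F q‖ ≤ m * (α' * ‖η'‖ / n + ε₁ * (L/n))
            ∧ (a n < 1 → ‖G (z (a m) ((m:ℝ)/n)) - G q‖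
                ≤ a m * ‖ξ‖ / α + m * (ε₁ * (L/n))) := by
          intro m
          induction m with
          | zero =>
            intro _
            rw [hzq]
            simp only [sub_self, norm_zero, Nat.cast_zero, zero_mul, ha0, zero_div, add_zero]
            exact ⟨le_refl 0, le_refl 0, fun _ => le_refl 0⟩
          | succ m ih =>
            intro hm1
            have hm : m ≤ n := le_of_lt (Nat.lt_of_succ_le hm1)
            have hmlt : m < n := Nat.lt_of_succ_le hm1
            obtain ⟨ihG, ihF, ihG2⟩ := ih hm
            obtain ⟨⟨hGs, hFs⟩, hG2s⟩ := hker m hmlt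
            have hcast : (((m+1:ℕ)):ℝ) = (m:ℝ) + 1 := by push_cast; ring
            rw [hcast]
            have htriG2 : ‖G (z (a (m+1)) (((m:ℝ)+1)/n)) - G q‖
                ≤ ‖G (z (a (m+1)) (((m:ℝ)+1)/n)) - G (z (a m) ((m:ℝ)/n))‖
                  + ‖G (z (a m) ((m:ℝ)/n)) - G q‖ := by
              have := norm_add_le (G (z (a (m+1)) (((m:ℝ)+1)/n)) - G (z (a m) ((m:ℝ)/n)))
                (G (z (a m) ((m:ℝ)/n)) - G q)
              rwa [sub_add_sub_cancel] at this
            have htriF2 : ‖F (z (a (m+1)) (((m:ℝ)+1)/n)) - F q‖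
                ≤ ‖F (z (a (m+1)) (((m:ℝ)+1)/n)) - F (z (a m) ((m:ℝ)/n))‖
                  + ‖F (z (a m) ((m:ℝ)/n)) - F q‖ := by
              have := norm_add_le (F (z (a (m+1)) (((m:ℝ)+1)/n)) - F (z (a m) ((m:ℝ)/n)))
                (F (z (a m) ((m:ℝ)/n)) - F q)
              rwa [sub_add_sub_cancel] at this
            refine ⟨?_, ?_, ?_⟩
            · calc ‖G (z (a (m+1)) (((m:ℝ)+1)/n)) - G q‖
                  ≤ (lamu * ‖η'‖ / n + ε₁ * (L/n)) + m * (lamu * ‖η'‖ / n + ε₁ * (L/n)) := by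
                    linarith
                _ = ((m:ℝ)+1) * (lamu * ‖η'‖ / n + ε₁ * (L/n)) := by ring
            · calc ‖F (z (a (m+1)) (((m:ℝ)+1)/n)) - F q‖
                  ≤ (α' * ‖η'‖ / n + ε₁ * (L/n)) + m * (α' * ‖η'‖ / n + ε₁ * (L/n)) := by
                    linarith
                _ = ((m:ℝ)+1) * (α' * ‖η'‖ / n + ε₁ * (L/n)) := by ring
            · intro hless
              have h1 := hG2s hless
              have h2 := ihG2 hless
              calc ‖G (z (a (m+1)) (((m:ℝ)+1)/n)) - G q‖
                  ≤ ((a (m+1) - a m) * ‖ξ‖ / α + ε₁ * (L/n))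
                    + (a m * ‖ξ‖ / α + m * (ε₁ * (L/n))) := by linarith
                _ = a (m+1) * ‖ξ‖ / α + ((m:ℝ)+1) * (ε₁ * (L/n)) := by ring
        -- endgame
        obtain ⟨hcG, hcF, hcG2⟩ := hcum n le_rfl
        have hnn : ((n:ℕ):ℝ)/(n:ℝ) = 1 := div_self hn0
        have hzn2 : z (a n) (((n:ℕ):ℝ)/n) = ((q.1 + a n • ξ, p.2) : X₁ × Y₂) := by
          rw [hnn]
          simp only [hzdef, one_smul]
          rw [hηdef, add_sub_cancel]
        have hεL : ε₁ * L ≤ ε := by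
          have hLC : L ≤ C₂ := by
            rw [hC₂def]
            have : 0 ≤ α * L * (M + β) / (1 - α * β) := by positivity
            linarith
          rw [hε₁def, div_mul_eq_mul_div, div_le_iff₀ hC₂]
          nlinarith
        have hsimpG : (n:ℝ) * (lamu * ‖η'‖ / n + ε₁ * (L/n)) = lamu * ‖η'‖ + ε₁ * L := by
          field_simp
        have hsimpF : (n:ℝ) * (α' * ‖η'‖ / n + ε₁ * (L/n)) = α' * ‖η'‖ + ε₁ * L := by
          field_simp
        have hsimp2 : (n:ℝ) * (ε₁ * (L/n)) = ε₁ * L := by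
          field_simp
        rw [hsimpG] at hcG
        rw [hsimpF] at hcF
        by_cases han : a n = 1
        · have hzp : z (a n) (((n:ℕ):ℝ)/n) = p := by
            rw [hzn2, han, one_smul, hξdef, add_sub_cancel]
          rw [hzp] at hcG hcF
          exact ⟨hcF.trans (by linarith), hcG.trans (by linarith)⟩
        · have han' : a n < 1 := lt_of_le_of_ne (hab n).2 han
          have h6 := hcG2 han'
          rw [hsimp2] at h6
          have hpK : p ∈ K := by
            have := hzmem 1 1 ⟨zero_le_one, le_refl 1⟩ ⟨zero_le_one, le_refl 1⟩
            rwa [show z 1 1 = p by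
              simp only [hzdef, one_smul]
              rw [hξdef, hηdef, add_sub_cancel, add_sub_cancel]] at this
          have hznK : z (a n) (((n:ℕ):ℝ)/n) ∈ K := hzkK n le_rfl
          have hpdiff : p - z (a n) (((n:ℕ):ℝ)/n) = (((1 - a n) • ξ, (0:Y₂)) : X₁ × Y₂) := by
            rw [hzn2]
            have : p = ((p.1, p.2) : X₁ × Y₂) := rfl
            rw [this, Prod.mk_sub_mk, sub_self]
            congr 1
            rw [sub_smul, one_smul, hξdef]
            abel
          have hpnorm : ‖p - z (a n) (((n:ℕ):ℝ)/n)‖ = (1 - a n) * ‖ξ‖ := by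
            rw [hpdiff]
            have h7 : ‖(((1 - a n) • ξ, (0:Y₂)) : X₁ × Y₂)‖
                = max ‖(1 - a n) • ξ‖ ‖(0:Y₂)‖ := rfl
            rw [h7, norm_zero, max_eq_left (norm_nonneg _), norm_smul, Real.norm_eq_abs,
              abs_of_nonneg (by linarith)]
          have hGpzn : ‖G p - G (z (a n) (((n:ℕ):ℝ)/n))‖ ≤ β * ((1 - a n) * ‖ξ‖) := by
            rw [hzn2]
            have := hLip p.2 p.1 (q.1 + a n • ξ)
            rw [show ((p.1, p.2) : X₁ × Y₂) = p from rfl] at this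
            refine this.trans ?_
            rw [show p.1 - (q.1 + a n • ξ) = (1 - a n) • ξ by
              rw [sub_smul, one_smul, hξdef]; abel,
              norm_smul, Real.norm_eq_abs, abs_of_nonneg (by linarith)]
          have hFpzn : ‖F p - F (z (a n) (((n:ℕ):ℝ)/n))‖ ≤ M * ((1 - a n) * ‖ξ‖) := by
            have := hFLip p hpK _ hznK
            rwa [hpnorm] at this
          -- the contradiction-style bound : 1 - a n is small
          have h8 : α * (a n * ‖ξ‖ / α) = a n * ‖ξ‖ := by field_simp
          have htriGq : ‖G p - G q‖ ≤ ‖G p - G (z (a n) (((n:ℕ):ℝ)/n))‖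
              + ‖G (z (a n) (((n:ℕ):ℝ)/n)) - G q‖ := by
            have := norm_add_le (G p - G (z (a n) (((n:ℕ):ℝ)/n)))
              (G (z (a n) (((n:ℕ):ℝ)/n)) - G q)
            rwa [sub_add_sub_cancel] at this
          have htriFq : ‖F p - F q‖ ≤ ‖F p - F (z (a n) (((n:ℕ):ℝ)/n))‖
              + ‖F (z (a n) (((n:ℕ):ℝ)/n)) - F q‖ := by
            have := norm_add_le (F p - F (z (a n) (((n:ℕ):ℝ)/n)))
              (F (z (a n) (((n:ℕ):ℝ)/n)) - F q)
            rwa [sub_add_sub_cancel] at this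
          have hkey : (1 - a n) * ‖ξ‖ * (1 - α * β) ≤ α * (ε₁ * L) := by
            have hGzn2 : α * ‖G (z (a n) (((n:ℕ):ℝ)/n)) - G q‖ ≤ a n * ‖ξ‖ + α * (ε₁ * L) := by
              calc α * ‖G (z (a n) (((n:ℕ):ℝ)/n)) - G q‖
                  ≤ α * (a n * ‖ξ‖ / α + ε₁ * L) := mul_le_mul_of_nonneg_left h6 hα
                _ = α * (a n * ‖ξ‖ / α) + α * (ε₁ * L) := mul_add _ _ _
                _ = a n * ‖ξ‖ + α * (ε₁ * L) := by rw [h8]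
            have h9 : α * ‖G p - G q‖
                ≤ α * (β * ((1 - a n) * ‖ξ‖)) + (a n * ‖ξ‖ + α * (ε₁ * L)) := by
              calc α * ‖G p - G q‖
                  ≤ α * (‖G p - G (z (a n) (((n:ℕ):ℝ)/n))‖
                      + ‖G (z (a n) (((n:ℕ):ℝ)/n)) - G q‖) :=
                    mul_le_mul_of_nonneg_left htriGq hα
                _ = α * ‖G p - G (z (a n) (((n:ℕ):ℝ)/n))‖
                      + α * ‖G (z (a n) (((n:ℕ):ℝ)/n)) - G q‖ := mul_add _ _ _
                _ ≤ α * (β * ((1 - a n) * ‖ξ‖)) + (a n * ‖ξ‖ + α * (ε₁ * L)) :=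
                    add_le_add (mul_le_mul_of_nonneg_left hGpzn hα) hGzn2
            nlinarith [hyp]
          have h1an : (1 - a n) * ‖ξ‖ ≤ α * (ε₁ * L) / (1 - α * β) := by
            rw [le_div_iff₀ h1αβ]
            linarith
          have hML : M * ((1 - a n) * ‖ξ‖) ≤ M * (α * (ε₁ * L) / (1 - α * β)) :=
            mul_le_mul_of_nonneg_left h1an hM
          have hβL : β * ((1 - a n) * ‖ξ‖) ≤ β * (α * (ε₁ * L) / (1 - α * β)) :=
            mul_le_mul_of_nonneg_left h1an hβ
          have hfinal : ε₁ * L + (M + β) * (α * (ε₁ * L) / (1 - α * β)) ≤ ε := by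
            have h10 : ε₁ * L + (M + β) * (α * (ε₁ * L) / (1 - α * β))
                = ε₁ * (L + α * L * (M + β) / (1 - α * β)) := by
              field_simp
            rw [h10, hε₁def]
            rw [div_mul_eq_mul_div, div_le_iff₀ hC₂]
            have h11 : L + α * L * (M + β) / (1 - α * β) ≤ C₂ := by
              rw [hC₂def]
              linarith
            nlinarith
          constructor
          · calc ‖F p - F q‖ ≤ M * ((1 - a n) * ‖ξ‖) + (α' * ‖η'‖ + ε₁ * L) :=
                le_trans htriFq (add_le_add hFpzn hcF)
              _ ≤ α' * ‖η'‖ + (ε₁ * L + M * (α * (ε₁ * L) / (1 - α * β))) := by linarith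
              _ ≤ α' * ‖η'‖ + ε := by
                  have : M * (α * (ε₁ * L) / (1 - α * β)) ≤ (M + β) * (α * (ε₁ * L) / (1 - α * β)) := by
                    apply mul_le_mul_of_nonneg_right (by linarith) (by positivity)
                  linarith
          · calc ‖G p - G q‖ ≤ β * ((1 - a n) * ‖ξ‖) + (lamu * ‖η'‖ + ε₁ * L) :=
                le_trans htriGq (add_le_add hGpzn hcG)
              _ ≤ lamu * ‖η'‖ + (ε₁ * L + β * (α * (ε₁ * L) / (1 - α * β))) := by linarith
              _ ≤ lamu * ‖η'‖ + ε := by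
                  have : β * (α * (ε₁ * L) / (1 - α * β)) ≤ (M + β) * (α * (ε₁ * L) / (1 - α * β)) := by
                    apply mul_le_mul_of_nonneg_right (by linarith) (by positivity)
                  linarith
end

section
/- Local version: the nonlinear (A)-condition on balls implies the linearized (A)-condition. Let X₁, Y₁, X₂, Y₂ be Banach spaces and r₁, r₁′, r₂, r₂′ ∈ (0,∞]. Let F : X₁(r₁) × Y₂(r₂′) → X₂(r₂) and G : X₁(r₁) × Y₂(r₂′) → Y₁(r₁′) be continuously Fréchet differentiable, and let α, α′, λ_u, β ≥ 0 with α·β < 1/2. Suppose the correspondence H ∼ (F,G) (with graph quantified over these ball domains) satisfies the (A)(α;α′,λ_u) condition, and Lip G(·,y) ≤ β for every y ∈ Y₂(r₂′). Then for every (x₁,y₂) ∈ X₁(r₁) × Y₂(r₂′): for all (ξ,η′) ∈ X₁ × Y₂, writing η = DG(x₁,y₂)(ξ,η′) and ξ′ = DF(x₁,y₂)(ξ,η′), the inequality ‖ξ‖ ≤ α·‖η‖ implies both ‖ξ′‖ ≤ α′·‖η′‖ and ‖η‖ ≤ λ_u·‖η′‖; moreover ‖D₁G(x₁,y₂)‖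 ≤ β. -/
open scoped ENNReal NNReal
open Filter Topology Set

lemma aux_slope_tendsto {E F : Type*} [NormedAddCommGroup E] [NormedSpace ℝ E]
    [NormedAddCommGroup F] [NormedSpace ℝ F] {f : E → F} {p : E} {Df : E →L[ℝ] F}
    (hf : HasFDerivAt f Df p) (v : E) :
    Tendsto (fun t : ℝ => t⁻¹ * ‖f (p + t • v) - f p‖) (𝓝[>] 0) (𝓝 ‖Df v‖) := by
  have hline : HasDerivAt (fun t : ℝ => p + t • v) v 0 := by
    simpa using ((hasDerivAt_id (0:ℝ)).smul_const v).const_add p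
  have h0 : p + (0:ℝ) • v = p := by simp
  rw [← h0] at hf
  have hcomp : HasDerivAt (fun t : ℝ => f (p + t • v)) (Df v) 0 :=
    hf.comp_hasDerivAt 0 hline
  have hs := (hasDerivAt_iff_tendsto_slope.mp hcomp).norm
  have hs' := hs.mono_left (nhdsWithin_mono 0 fun x hx => ne_of_gt hx)
  refine hs'.congr' ?_
  filter_upwards [self_mem_nhdsWithin] with t ht
  have htpos : (0:ℝ) < t := ht
  simp [slope, h0, norm_smul, abs_of_pos htpos]

set_option maxHeartbeats 1000000 in
/-- Local version: the nonlinear (A)-condition on balls implies the linearized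
(A)-condition. -/
theorem local_A_condition_implies_linearized
    {X₁ Y₁ X₂ Y₂ : Type*}
    [NormedAddCommGroup X₁] [NormedSpace ℝ X₁] [CompleteSpace X₁]
    [NormedAddCommGroup Y₁] [NormedSpace ℝ Y₁] [CompleteSpace Y₁]
    [NormedAddCommGroup X₂] [NormedSpace ℝ X₂] [CompleteSpace X₂]
    [NormedAddCommGroup Y₂] [NormedSpace ℝ Y₂] [CompleteSpace Y₂]
    (r₁ r₁' r₂ r₂' : ℝ≥0∞) (hr₁ : 0 < r₁) (hr₁' : 0 < r₁') (hr₂ : 0 < r₂) (hr₂' : 0 < r₂')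
    (F : X₁ × Y₂ → X₂) (G : X₁ × Y₂ → Y₁)
    (S : Set (X₁ × Y₂))
    (hS : S = {p : X₁ × Y₂ | (‖p.1‖₊ : ℝ≥0∞) < r₁ ∧ (‖p.2‖₊ : ℝ≥0∞) < r₂'})
    -- F, G are continuously Fréchet differentiable on the ball domain
    (hFC1 : ContDiffOn ℝ 1 F S) (hGC1 : ContDiffOn ℝ 1 G S)
    -- F, G map the ball domain into the prescribed balls
    (hFmap : ∀ p ∈ S, (‖F p‖₊ : ℝ≥0∞) < r₂)
    (hGmap : ∀ p ∈ S, (‖G p‖₊ : ℝ≥0∞) < r₁')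
    (α α' lamu β : ℝ)
    (hα : 0 ≤ α) (hα'0 : 0 ≤ α') (hlamu : 0 ≤ lamu) (hβ : 0 ≤ β)
    (hαβ : α * β < 1 / 2)
    -- H satisfies the (A)(α; α′, λ_u) condition on the ball domain
    (hA : ∀ p ∈ S, ∀ q ∈ S,
      ‖p.1 - q.1‖ ≤ α * ‖G p - G q‖ →
        ‖F p - F q‖ ≤ α' * ‖p.2 - q.2‖ ∧ ‖G p - G q‖ ≤ lamu * ‖p.2 - q.2‖)
    -- Lip G(·, y) ≤ β for every y in the ball
    (hβLip : ∀ y : Y₂, (‖y‖₊ : ℝ≥0∞) < r₂' → ∀ x x' : X₁,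
      (‖x‖₊ : ℝ≥0∞) < r₁ → (‖x'‖₊ : ℝ≥0∞) < r₁ →
      ‖G (x, y) - G (x', y)‖ ≤ β * ‖x - x'‖) :
    ∀ p ∈ S,
      (∀ (ξ : X₁) (η' : Y₂),
        ‖ξ‖ ≤ α * ‖fderiv ℝ G p (ξ, η')‖ →
          ‖fderiv ℝ F p (ξ, η')‖ ≤ α' * ‖η'‖ ∧
            ‖fderiv ℝ G p (ξ, η')‖ ≤ lamu * ‖η'‖) ∧
      ‖(fderiv ℝ G p).comp (ContinuousLinearMap.inl ℝ X₁ Y₂)‖ ≤ β := by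
  have hSopen : IsOpen S := by
    have hSeq : S = (Prod.fst ⁻¹' Metric.eball (0:X₁) r₁) ∩
        (Prod.snd ⁻¹' Metric.eball (0:Y₂) r₂') := by
      rw [hS]; ext q
      simp [Metric.mem_eball, edist_eq_enorm_sub, enorm]
    rw [hSeq]
    exact (EMetric.isOpen_ball.preimage continuous_fst).inter
      (EMetric.isOpen_ball.preimage continuous_snd)
  intro p hp
  have hp' := hp
  rw [hS] at hp'
  have hFd : DifferentiableAt ℝ F p :=
    ((hFC1.differentiableOn one_ne_zero) p hp).differentiableAt (hSopen.mem_nhds hp)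
  have hGd : DifferentiableAt ℝ G p :=
    ((hGC1.differentiableOn one_ne_zero) p hp).differentiableAt (hSopen.mem_nhds hp)
  have hF := hFd.hasFDerivAt
  have hG := hGd.hasFDerivAt
  set DF := fderiv ℝ F p with hDFdef
  set DG := fderiv ℝ G p with hDGdef
  -- eventual membership of the perturbed point in S
  have hmem : ∀ v : X₁ × Y₂, ∀ᶠ t : ℝ in 𝓝[>] (0:ℝ), p + t • v ∈ S := by
    intro v
    have hc : ContinuousAt (fun t : ℝ => p + t • v) 0 :=
      (continuous_const.add (continuous_id.smul continuous_const)).continuousAt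
    have h0 : p + (0:ℝ) • v = p := by simp
    have hnb : S ∈ 𝓝 ((fun t : ℝ => p + t • v) 0) := by
      simpa [h0] using hSopen.mem_nhds hp
    exact (hc.eventually_mem hnb).filter_mono nhdsWithin_le_nhds
  -- bound on the partial derivative in the first variable
  have hβ' : ∀ ζ : X₁, ‖DG (ζ, (0:Y₂))‖ ≤ β * ‖ζ‖ := by
    intro ζ
    have hT := aux_slope_tendsto hG (ζ, (0:Y₂))
    refine le_of_tendsto hT ?_
    filter_upwards [hmem (ζ, 0), self_mem_nhdsWithin] with t hq ht
    have htpos : (0:ℝ) < t := ht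
    have h1 : p + t • ((ζ, (0:Y₂)) : X₁ × Y₂) = (p.1 + t • ζ, p.2) := by
      simp [Prod.ext_iff]
    rw [h1] at hq ⊢
    rw [hS] at hq
    have hq1 : (‖p.1 + t • ζ‖₊ : ℝ≥0∞) < r₁ := hq.1
    have hLip := hβLip p.2 hp'.2 (p.1 + t • ζ) p.1 hq1 hp'.1
    have hdiff : ‖(p.1 + t • ζ) - p.1‖ = t * ‖ζ‖ := by
      simp [norm_smul, abs_of_pos htpos]
    have hGp : G (p.1, p.2) = G p := by simp
    rw [hGp, hdiff] at hLip
    calc t⁻¹ * ‖G (p.1 + t • ζ, p.2) - G p‖ ≤ t⁻¹ * (β * (t * ‖ζ‖)) := by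
          exact mul_le_mul_of_nonneg_left hLip (inv_nonneg.mpr htpos.le)
      _ = β * ‖ζ‖ := by field_simp
  -- key limiting argument
  have key : ∀ (ξ : X₁) (η' : Y₂), (ξ = 0 ∨ ‖ξ‖ < α * ‖DG (ξ, η')‖) →
      ‖DF (ξ, η')‖ ≤ α' * ‖η'‖ ∧ ‖DG (ξ, η')‖ ≤ lamu * ‖η'‖ := by
    intro ξ η' hcase
    have hTF := aux_slope_tendsto hF ((ξ, η') : X₁ × Y₂)
    have hTG := aux_slope_tendsto hG ((ξ, η') : X₁ × Y₂)
    have hcond : ∀ᶠ t : ℝ in 𝓝[>] (0:ℝ),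
        ‖ξ‖ ≤ α * (t⁻¹ * ‖G (p + t • ((ξ, η') : X₁ × Y₂)) - G p‖) := by
      rcases hcase with h0 | hlt
      · filter_upwards [self_mem_nhdsWithin] with t ht
        have htpos : (0:ℝ) < t := ht
        simp only [h0, norm_zero]
        exact mul_nonneg hα (mul_nonneg (inv_nonneg.mpr htpos.le) (norm_nonneg _))
      · exact ((hTG.const_mul α).eventually (eventually_gt_nhds hlt)).mono
          fun t ht => le_of_lt ht
    have hev : ∀ᶠ t : ℝ in 𝓝[>] (0:ℝ),
        t⁻¹ * ‖F (p + t • ((ξ, η') : X₁ × Y₂)) - F p‖ ≤ α' * ‖η'‖ ∧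
        t⁻¹ * ‖G (p + t • ((ξ, η') : X₁ × Y₂)) - G p‖ ≤ lamu * ‖η'‖ := by
      filter_upwards [hmem (ξ, η'), self_mem_nhdsWithin, hcond] with t hq ht hcd
      have htpos : (0:ℝ) < t := ht
      set q : X₁ × Y₂ := p + t • ((ξ, η') : X₁ × Y₂) with hqdef
      have hq1 : q.1 = p.1 + t • ξ := rfl
      have hq2 : q.2 = p.2 + t • η' := rfl
      have hx : ‖p.1 - q.1‖ = t * ‖ξ‖ := by
        rw [hq1]
        simp [norm_smul, abs_of_pos htpos]
      have hy : ‖p.2 - q.2‖ = t * ‖η'‖ := by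
        rw [hq2]
        simp [norm_smul, abs_of_pos htpos]
      have hGrev : ‖G p - G q‖ = ‖G q - G p‖ := norm_sub_rev _ _
      have hhyp : ‖p.1 - q.1‖ ≤ α * ‖G p - G q‖ := by
        rw [hx, hGrev]
        have := mul_le_mul_of_nonneg_left hcd (le_of_lt htpos)
        calc t * ‖ξ‖ ≤ t * (α * (t⁻¹ * ‖G q - G p‖)) := this
          _ = α * ‖G q - G p‖ := by field_simp
      obtain ⟨hF2, hG2⟩ := hA p hp q hq hhyp
      rw [hy] at hF2 hG2
      rw [hGrev] at hG2
      have hFrev : ‖F p - F q‖ = ‖F q - F p‖ := norm_sub_rev _ _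
      rw [hFrev] at hF2
      constructor
      · calc t⁻¹ * ‖F q - F p‖ ≤ t⁻¹ * (α' * (t * ‖η'‖)) :=
            mul_le_mul_of_nonneg_left hF2 (inv_nonneg.mpr htpos.le)
          _ = α' * ‖η'‖ := by field_simp
      · calc t⁻¹ * ‖G q - G p‖ ≤ t⁻¹ * (lamu * (t * ‖η'‖)) :=
            mul_le_mul_of_nonneg_left hG2 (inv_nonneg.mpr htpos.le)
          _ = lamu * ‖η'‖ := by field_simp
    exact ⟨le_of_tendsto hTF (hev.mono fun t h => h.1),
           le_of_tendsto hTG (hev.mono fun t h => h.2)⟩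
  refine ⟨?_, ?_⟩
  · intro ξ η' hle
    by_cases hξ : ξ = 0
    · exact key ξ η' (Or.inl hξ)
    · have hξn : 0 < ‖ξ‖ := norm_pos_iff.mpr hξ
      have hαpos : 0 < α * ‖DG (ξ, η')‖ := lt_of_lt_of_le hξn hle
      have hαg : 0 < α := by
        rcases lt_or_eq_of_le hα with h | h
        · exact h
        · exfalso; rw [← h] at hαpos; simp at hαpos
      have hη : 0 < ‖DG (ξ, η')‖ := by
        rcases (norm_nonneg (DG (ξ, η'))).lt_or_eq with h | h
        · exact h
        · exfalso; rw [← h] at hαpos; simp at hαpos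
      have hslim : ∀ s : ℝ, 0 < s → s < 1 →
          ‖DF ((1 - s) • ξ, η')‖ ≤ α' * ‖η'‖ ∧ ‖DG ((1 - s) • ξ, η')‖ ≤ lamu * ‖η'‖ := by
        intro s hs hs1
        apply key
        right
        have hsplit : (((1 - s) • ξ, η') : X₁ × Y₂) = (ξ, η') - s • ((ξ, (0:Y₂)) : X₁ × Y₂) := by
          simp [Prod.ext_iff, sub_smul]
        have hDGs : DG ((1 - s) • ξ, η') = DG (ξ, η') - s • DG (ξ, (0:Y₂)) := by
          rw [hsplit, map_sub, map_smul]
        have h2 : ‖DG (ξ, (0:Y₂))‖ ≤ β * ‖ξ‖ := hβ' ξ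
        have hlow : (1 - s * (α * β)) * ‖DG (ξ, η')‖ ≤ ‖DG ((1 - s) • ξ, η')‖ := by
          rw [hDGs]
          have h1 : ‖DG (ξ, η')‖ - s * ‖DG (ξ, (0:Y₂))‖ ≤ ‖DG (ξ, η') - s • DG (ξ, (0:Y₂))‖ := by
            have := norm_sub_norm_le (DG (ξ, η')) (s • DG (ξ, (0:Y₂)))
            simpa [norm_smul, abs_of_pos hs] using this
          have h3 : β * ‖ξ‖ ≤ β * (α * ‖DG (ξ, η')‖) :=
            mul_le_mul_of_nonneg_left hle hβ
          have h4 : s * ‖DG (ξ, (0:Y₂))‖ ≤ s * (β * (α * ‖DG (ξ, η')‖)) :=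
            mul_le_mul_of_nonneg_left (h2.trans h3) hs.le
          nlinarith [h1, h4]
        have hup : ‖((1 - s) • ξ : X₁)‖ = (1 - s) * ‖ξ‖ := by
          rw [norm_smul, Real.norm_eq_abs, abs_of_pos (by linarith)]
        rw [hup]
        have hαβ1 : α * β < 1 := by linarith
        calc (1 - s) * ‖ξ‖ ≤ (1 - s) * (α * ‖DG (ξ, η')‖) :=
              mul_le_mul_of_nonneg_left hle (by linarith)
          _ < (1 - s * (α * β)) * (α * ‖DG (ξ, η')‖) := by nlinarith [mul_pos hs hαpos]
          _ = α * ((1 - s * (α * β)) * ‖DG (ξ, η')‖) := by ring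
          _ ≤ α * ‖DG ((1 - s) • ξ, η')‖ := mul_le_mul_of_nonneg_left hlow hα
      have hcontF : Tendsto (fun s : ℝ => ‖DF ((1 - s) • ξ, η')‖) (𝓝[>] (0:ℝ))
          (𝓝 ‖DF (ξ, η')‖) := by
        have hc : Continuous fun s : ℝ => ‖DF ((1 - s) • ξ, η')‖ :=
          (DF.continuous.comp (((continuous_const.sub continuous_id).smul
            continuous_const).prodMk continuous_const)).norm
        have := hc.tendsto 0
        simpa using this.mono_left nhdsWithin_le_nhds
      have hcontG : Tendsto (fun s : ℝ => ‖DG ((1 - s) • ξ, η')‖) (𝓝[>] (0:ℝ))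
          (𝓝 ‖DG (ξ, η')‖) := by
        have hc : Continuous fun s : ℝ => ‖DG ((1 - s) • ξ, η')‖ :=
          (DG.continuous.comp (((continuous_const.sub continuous_id).smul
            continuous_const).prodMk continuous_const)).norm
        have := hc.tendsto 0
        simpa using this.mono_left nhdsWithin_le_nhds
      have hIoo : Ioo (0:ℝ) 1 ∈ 𝓝[>] (0:ℝ) :=
        Ioo_mem_nhdsGT_of_mem (by constructor <;> norm_num)
      constructor
      · exact le_of_tendsto hcontF
          ((eventually_iff_exists_mem.mpr ⟨Ioo 0 1, hIoo, fun s hs => (hslim s hs.1 hs.2).1⟩))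
      · exact le_of_tendsto hcontG
          ((eventually_iff_exists_mem.mpr ⟨Ioo 0 1, hIoo, fun s hs => (hslim s hs.1 hs.2).2⟩))
  · refine ContinuousLinearMap.opNorm_le_bound _ hβ fun ζ => ?_
    simpa using hβ' ζ
end

section
/- Global invariant foliation for bundle maps: existence and uniqueness. Let M be a set, u : M → M a map, and for each m ∈ M let X_m and Y_m be complete metric spaces. Let H be a bundle map over u with generating bundle map (F,G), i.e. maps H_m : X_m × Y_m → X_{u(m)} × Y_{u(m)} such that for every (x₁,y₁) ∈ X_m × Y_m there is exactly one ((x₁,y₁),(x₂,y₂)) ∈ Graph H_m, and H_m(x₁,y₁) denotes that point (x₂,y₂). Assume H satisfies the (A′)(α,λ_u)(B)(β;β′,λ_s) condition, where α, λ_u, β, β′, λ_s : M → [0,∞) are bounded functions such that sup_{m∈M} α(m)·β′(u(m)) < 1, β′(u(m)) ≤ β(m) for all m, and sup_{m∈M} λ_s(m)·λ_u(m)/(1 − α(m)·β′(u(m))) < 1. Then there exists a unique family of maps f_{m,q} : X_m → Y_m, indexed by m ∈ M and q = (q_x, q_y) ∈ X_m × Y_m, such that for every m and q: (1) f_{m,q}(q_x)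 = q_y and Lip f_{m,q} ≤ β′(m); (2) H_m maps the graph of f_{m,q} into the graph of f_{u(m), H_m(q)}, i.e. for every x ∈ X_m, writing H_m(x, f_{m,q}(x)) = (x′, y′), one has y′ = f_{u(m), H_m(q)}(x′). -/
open Filter Topology NNReal

lemma my_fixed_point_exists_unique {A : Type*} [MetricSpace A] [CompleteSpace A]
    (Φ : A → A) (c : ℝ) (hc : c < 1)
    (h : ∀ y y', dist (Φ y) (Φ y') ≤ c * dist y y') (y₀ : A) :
    ∃! y : A, Φ y = y := by
  haveI : Nonempty A := ⟨y₀⟩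
  set c' : ℝ := max c 0 with hc'def
  have hc'lt : c' < 1 := max_lt hc one_pos
  have hc'0 : 0 ≤ c' := le_max_right _ _
  have h' : ∀ y y', dist (Φ y) (Φ y') ≤ c' * dist y y' := fun y y' =>
    (h y y').trans (mul_le_mul_of_nonneg_right (le_max_left _ _) dist_nonneg)
  have hlip : LipschitzWith (Real.toNNReal c') Φ := by
    apply LipschitzWith.of_dist_le_mul
    intro y y'
    rw [Real.coe_toNNReal _ hc'0]
    exact h' y y'
  have hK : (Real.toNNReal c' : ℝ≥0) < 1 := by
    exact Real.toNNReal_lt_one.mpr hc'lt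
  have hcontr : ContractingWith (Real.toNNReal c') Φ := ⟨hK, hlip⟩
  refine ⟨ContractingWith.fixedPoint Φ hcontr, hcontr.fixedPoint_isFixedPt, ?_⟩
  intro y hy
  exact hcontr.fixedPoint_unique hy



/-- Global invariant foliation for bundle maps: existence and uniqueness. -/
theorem invariant_foliation_bundle_maps
    {M : Type*} (u : M → M) (X Y : M → Type*)
    [∀ m, MetricSpace (X m)] [∀ m, CompleteSpace (X m)]
    [∀ m, MetricSpace (Y m)] [∀ m, CompleteSpace (Y m)]
    (F : ∀ m, X m → Y (u m) → X (u m)) (G : ∀ m, X m → Y (u m) → Y m)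
    -- H is a bundle map over u whose fiber graphs are generated by (F, G)
    (H : ∀ m, X m × Y m → X (u m) × Y (u m))
    (hH : ∀ m (p : X m × Y m),
      p.2 = G m p.1 (H m p).2 ∧ (H m p).1 = F m p.1 (H m p).2)
    (hHuniq : ∀ m (p : X m × Y m) (q : X (u m) × Y (u m)),
      p.2 = G m p.1 q.2 → q.1 = F m p.1 q.2 → q = H m p)
    (α lamu β β' lams : M → ℝ)
    (hα : ∀ m, 0 ≤ α m) (hlamu : ∀ m, 0 ≤ lamu m) (hβ : ∀ m, 0 ≤ β m)
    (hβ'0 : ∀ m, 0 ≤ β' m) (hlams : ∀ m, 0 ≤ lams m)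
    -- the functions are bounded
    (hbdd : ∃ C : ℝ, ∀ m, α m ≤ C ∧ lamu m ≤ C ∧ β m ≤ C ∧ β' m ≤ C ∧ lams m ≤ C)
    -- (A′)(α, λ_u) condition
    (hA'F : ∀ m (x : X m) (y y' : Y (u m)),
      dist (F m x y) (F m x y') ≤ α m * dist y y')
    (hA'G : ∀ m (x : X m) (y y' : Y (u m)),
      dist (G m x y) (G m x y') ≤ lamu m * dist y y')
    -- (B)(β; β′, λ_s) condition
    (hB : ∀ m (x₁ x₁' : X m) (y₂ y₂' : Y (u m)),
      dist y₂ y₂' ≤ β m * dist (F m x₁ y₂) (F m x₁' y₂') →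
        dist (G m x₁ y₂) (G m x₁' y₂') ≤ β' m * dist x₁ x₁' ∧
          dist (F m x₁ y₂) (F m x₁' y₂') ≤ lams m * dist x₁ x₁')
    (hangle : ∃ c : ℝ, c < 1 ∧ ∀ m, α m * β' (u m) ≤ c)
    (hββ' : ∀ m, β' (u m) ≤ β m)
    (hspec : ∃ c : ℝ, c < 1 ∧ ∀ m,
      lams m * lamu m / (1 - α m * β' (u m)) ≤ c) :
    ∃ f : ∀ m, X m × Y m → X m → Y m,
      (∀ m (q : X m × Y m),
        f m q q.1 = q.2 ∧
        (∀ a b : X m, dist (f m q a) (f m q b) ≤ β' m * dist a b) ∧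
        ∀ x : X m,
          (H m (x, f m q x)).2 = f (u m) (H m q) ((H m (x, f m q x)).1)) ∧
      ∀ f' : ∀ m, X m × Y m → X m → Y m,
        (∀ m (q : X m × Y m),
          f' m q q.1 = q.2 ∧
          (∀ a b : X m, dist (f' m q a) (f' m q b) ≤ β' m * dist a b) ∧
          ∀ x : X m,
            (H m (x, f' m q x)).2 = f' (u m) (H m q) ((H m (x, f' m q x)).1)) →
        ∀ m (q : X m × Y m), f' m q = f m q := by
  classical
  obtain ⟨C0, hC0⟩ := hbdd
  obtain ⟨c₁0, hc₁0lt, hc₁0⟩ := hangle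
  obtain ⟨c₂0, hc₂0lt, hc₂0⟩ := hspec
  set c₁ : ℝ := max c₁0 0 with hc₁def
  have hc₁lt : c₁ < 1 := max_lt hc₁0lt one_pos
  have hc₁m : ∀ m, α m * β' (u m) ≤ c₁ := fun m => (hc₁0 m).trans (le_max_left _ _)
  set c₂ : ℝ := max c₂0 0 with hc₂def
  have hc₂lt : c₂ < 1 := max_lt hc₂0lt one_pos
  have hc₂0le : (0:ℝ) ≤ c₂ := le_max_right _ _
  have hc₂m : ∀ m, lams m * lamu m / (1 - α m * β' (u m)) ≤ c₂ :=
    fun m => (hc₂0 m).trans (le_max_left _ _)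
  have hden : ∀ m, 0 < 1 - α m * β' (u m) := fun m => by
    have := hc₁m m; linarith
  set K₀ : ℝ := 2 * max C0 0 with hK₀def
  have hK₀0 : 0 ≤ K₀ := by rw [hK₀def]; positivity
  have hβ'C : ∀ m, β' m ≤ max C0 0 := fun m => le_max_of_le_left (hC0 m).2.2.2.1
  -- the space S of candidate families
  set S := {s : ∀ m, X m × Y m → X m → Y m //
      ∀ m (q : X m × Y m), s m q q.1 = q.2 ∧
        ∀ a b : X m, dist (s m q a) (s m q b) ≤ β' m * dist a b} with hSdef
  -- contraction fixed point for the graph transform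
  have fpEU : ∀ (s : S) (m : M) (q : X m × Y m) (x : X m),
      ∃! y : Y (u m), s.1 (u m) (H m q) (F m x y) = y := by
    intro s m q x
    refine my_fixed_point_exists_unique _ c₁ hc₁lt ?_ (H m q).2
    intro y y'
    calc dist (s.1 (u m) (H m q) (F m x y)) (s.1 (u m) (H m q) (F m x y'))
        ≤ β' (u m) * dist (F m x y) (F m x y') := (s.2 (u m) (H m q)).2 _ _
      _ ≤ β' (u m) * (α m * dist y y') :=
          mul_le_mul_of_nonneg_left (hA'F m x y y') (hβ'0 (u m))
      _ = α m * β' (u m) * dist y y' := by ring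
      _ ≤ c₁ * dist y y' := mul_le_mul_of_nonneg_right (hc₁m m) dist_nonneg
  choose yf hyf using fpEU
  have hFix : ∀ (s : S) (m : M) (q : X m × Y m) (x : X m),
      s.1 (u m) (H m q) (F m x (yf s m q x)) = yf s m q x := fun s m q x => (hyf s m q x).1
  have hUniq : ∀ (s : S) (m : M) (q : X m × Y m) (x : X m) (y : Y (u m)),
      s.1 (u m) (H m q) (F m x y) = y → y = yf s m q x := fun s m q x y h => (hyf s m q x).2 y h
  have hHmap : ∀ (s : S) (m : M) (q : X m × Y m) (x : X m),
      H m (x, G m x (yf s m q x)) = (F m x (yf s m q x), yf s m q x) :=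
    fun s m q x =>
      (hHuniq m (x, G m x (yf s m q x)) (F m x (yf s m q x), yf s m q x) rfl rfl).symm
  have hyfbase : ∀ (s : S) (m : M) (q : X m × Y m), yf s m q q.1 = (H m q).2 := by
    intro s m q
    refine (hUniq s m q q.1 (H m q).2 ?_).symm
    rw [← (hH m q).2]
    exact (s.2 (u m) (H m q)).1
  -- both (B) conclusions for the transform
  have hBoth : ∀ (s : S) (m : M) (q : X m × Y m) (a b : X m),
      dist (G m a (yf s m q a)) (G m b (yf s m q b)) ≤ β' m * dist a b ∧
      dist (F m a (yf s m q a)) (F m b (yf s m q b)) ≤ lams m * dist a b := by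
    intro s m q a b
    have h1 : dist (yf s m q a) (yf s m q b) ≤
        β m * dist (F m a (yf s m q a)) (F m b (yf s m q b)) := by
      calc dist (yf s m q a) (yf s m q b)
          = dist (s.1 (u m) (H m q) (F m a (yf s m q a)))
              (s.1 (u m) (H m q) (F m b (yf s m q b))) := by rw [hFix, hFix]
        _ ≤ β' (u m) * dist (F m a (yf s m q a)) (F m b (yf s m q b)) :=
            (s.2 (u m) (H m q)).2 _ _
        _ ≤ β m * dist (F m a (yf s m q a)) (F m b (yf s m q b)) :=
            mul_le_mul_of_nonneg_right (hββ' m) dist_nonneg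
    exact hB m a b _ _ h1
  have hGoodPair : ∀ s : S, ∀ (m : M) (q : X m × Y m),
      G m q.1 (yf s m q q.1) = q.2 ∧
        ∀ a b : X m, dist (G m a (yf s m q a)) (G m b (yf s m q b)) ≤ β' m * dist a b := by
    intro s m q
    constructor
    · rw [hyfbase s m q]; exact ((hH m q).1).symm
    · intro a b; exact (hBoth s m q a b).1
  -- the iteration
  set s0 : S := ⟨fun m q _ => q.2, fun m q => ⟨rfl, fun a b => by
    simpa using mul_nonneg (hβ'0 m) (dist_nonneg (x := a) (y := b))⟩⟩ with hs0def
  set step : S → S := fun s => ⟨fun m q x => G m x (yf s m q x), hGoodPair s⟩ with hstepdef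
  set seq : ℕ → S := fun n => step^[n] s0 with hseqdef
  have hseqsucc : ∀ n, seq (n+1) = step (seq n) := fun n =>
    Function.iterate_succ_apply' step n s0
  have hseqval : ∀ (n : ℕ) (m : M) (q : X m × Y m) (x : X m),
      (seq (n+1)).1 m q x = G m x (yf (seq n) m q x) := by
    intro n m q x
    rw [hseqsucc n, hstepdef]
  -- the fundamental contraction estimate
  have hContr : ∀ (s t : S) (K : ℝ), 0 ≤ K →
      (∀ (m : M) (q : X m × Y m) (x : X m), dist (s.1 m q x) (t.1 m q x) ≤ K * dist x q.1) →
      ∀ (m : M) (q : X m × Y m) (x : X m),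
        dist (G m x (yf s m q x)) (G m x (yf t m q x)) ≤ c₂ * K * dist x q.1 := by
    intro s t K hK hst m q x
    have e2 : dist (F m x (yf t m q x)) (H m q).1 ≤ lams m * dist x q.1 := by
      have h := (hBoth t m q x q.1).2
      rw [hyfbase t m q, ← (hH m q).2] at h
      exact h
    have e1 : dist (yf s m q x) (yf t m q x) ≤
        α m * β' (u m) * dist (yf s m q x) (yf t m q x) + K * (lams m * dist x q.1) := by
      calc dist (yf s m q x) (yf t m q x)
          = dist (s.1 (u m) (H m q) (F m x (yf s m q x)))
              (t.1 (u m) (H m q) (F m x (yf t m q x))) := by rw [hFix, hFix]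
        _ ≤ dist (s.1 (u m) (H m q) (F m x (yf s m q x)))
              (s.1 (u m) (H m q) (F m x (yf t m q x)))
            + dist (s.1 (u m) (H m q) (F m x (yf t m q x)))
              (t.1 (u m) (H m q) (F m x (yf t m q x))) := dist_triangle _ _ _
        _ ≤ β' (u m) * dist (F m x (yf s m q x)) (F m x (yf t m q x))
            + K * dist (F m x (yf t m q x)) (H m q).1 :=
            add_le_add ((s.2 (u m) (H m q)).2 _ _) (hst (u m) (H m q) _)
        _ ≤ β' (u m) * (α m * dist (yf s m q x) (yf t m q x)) + K * (lams m * dist x q.1) :=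
            add_le_add (mul_le_mul_of_nonneg_left (hA'F m x _ _) (hβ'0 (u m)))
              (mul_le_mul_of_nonneg_left e2 hK)
        _ = α m * β' (u m) * dist (yf s m q x) (yf t m q x) + K * (lams m * dist x q.1) := by
            ring
    have e3 : dist (yf s m q x) (yf t m q x) ≤
        K * (lams m * dist x q.1) / (1 - α m * β' (u m)) := by
      rw [le_div_iff₀ (hden m)]
      nlinarith [e1]
    calc dist (G m x (yf s m q x)) (G m x (yf t m q x))
        ≤ lamu m * dist (yf s m q x) (yf t m q x) := hA'G m x _ _
      _ ≤ lamu m * (K * (lams m * dist x q.1) / (1 - α m * β' (u m))) :=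
          mul_le_mul_of_nonneg_left e3 (hlamu m)
      _ = lams m * lamu m / (1 - α m * β' (u m)) * (K * dist x q.1) := by
          field_simp
      _ ≤ c₂ * (K * dist x q.1) :=
          mul_le_mul_of_nonneg_right (hc₂m m) (mul_nonneg hK dist_nonneg)
      _ = c₂ * K * dist x q.1 := by ring
  -- a priori bound between any two elements of S
  have hInit : ∀ (s t : S) (m : M) (q : X m × Y m) (x : X m),
      dist (s.1 m q x) (t.1 m q x) ≤ K₀ * dist x q.1 := by
    intro s t m q x
    have step1 : dist (s.1 m q x) (t.1 m q x)
        ≤ dist (s.1 m q x) (s.1 m q q.1) + dist (t.1 m q q.1) (t.1 m q x) := by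
      rw [(s.2 m q).1, (t.2 m q).1]
      exact dist_triangle _ _ _
    have step2 : dist (s.1 m q x) (s.1 m q q.1) + dist (t.1 m q q.1) (t.1 m q x)
        ≤ β' m * dist x q.1 + β' m * dist q.1 x :=
      add_le_add ((s.2 m q).2 _ _) ((t.2 m q).2 _ _)
    have step3 : β' m * dist x q.1 + β' m * dist q.1 x = 2 * β' m * dist x q.1 := by
      rw [dist_comm q.1 x]; ring
    have step4 : 2 * β' m * dist x q.1 ≤ K₀ * dist x q.1 := by
      rw [hK₀def]
      have h1 := hβ'C m
      have h2 : (0:ℝ) ≤ dist x q.1 := dist_nonneg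
      nlinarith
    linarith [step1, step2]
  -- geometric decay of the iteration
  have hIter : ∀ (n : ℕ) (m : M) (q : X m × Y m) (x : X m),
      dist ((seq (n+1)).1 m q x) ((seq n).1 m q x) ≤ K₀ * c₂ ^ n * dist x q.1 := by
    intro n
    induction n with
    | zero => intro m q x; simpa using hInit (seq 1) (seq 0) m q x
    | succ n ih =>
      intro m q x
      have h := hContr (seq (n+1)) (seq n) (K₀ * c₂ ^ n)
        (mul_nonneg hK₀0 (pow_nonneg hc₂0le n)) ih m q x
      calc dist ((seq (n+1+1)).1 m q x) ((seq (n+1)).1 m q x)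
          = dist (G m x (yf (seq (n+1)) m q x)) (G m x (yf (seq n) m q x)) := by
            rw [hseqval (n+1) m q x, hseqval n m q x]
        _ ≤ c₂ * (K₀ * c₂ ^ n) * dist x q.1 := h
        _ = K₀ * c₂ ^ (n+1) * dist x q.1 := by ring
  -- pointwise limits
  have hex : ∀ (m : M) (q : X m × Y m) (x : X m), ∃ y : Y m,
      Tendsto (fun n => (seq n).1 m q x) atTop (𝓝 y) := by
    intro m q x
    have hcau : CauchySeq (fun n => (seq n).1 m q x) := by
      apply cauchySeq_of_le_geometric c₂ (K₀ * dist x q.1) hc₂lt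
      intro n
      rw [dist_comm]
      calc dist ((seq (n+1)).1 m q x) ((seq n).1 m q x)
          ≤ K₀ * c₂ ^ n * dist x q.1 := hIter n m q x
        _ = K₀ * dist x q.1 * c₂ ^ n := by ring
    exact cauchySeq_tendsto_of_complete hcau
  choose f hf using hex
  have htail : ∀ (n : ℕ) (m : M) (q : X m × Y m) (x : X m),
      dist ((seq n).1 m q x) (f m q x) ≤ K₀ * c₂ ^ n / (1 - c₂) * dist x q.1 := by
    intro n m q x
    have hu : ∀ k, dist ((seq k).1 m q x) ((seq (k+1)).1 m q x)
        ≤ K₀ * dist x q.1 * c₂ ^ k := by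
      intro k
      rw [dist_comm]
      calc dist ((seq (k+1)).1 m q x) ((seq k).1 m q x)
          ≤ K₀ * c₂ ^ k * dist x q.1 := hIter k m q x
        _ = K₀ * dist x q.1 * c₂ ^ k := by ring
    have h := dist_le_of_le_geometric_of_tendsto c₂ (K₀ * dist x q.1) hc₂lt hu (hf m q x) n
    calc dist ((seq n).1 m q x) (f m q x)
        ≤ K₀ * dist x q.1 * c₂ ^ n / (1 - c₂) := h
      _ = K₀ * c₂ ^ n / (1 - c₂) * dist x q.1 := by ring
  -- the limit family is good
  have hfbase : ∀ (m : M) (q : X m × Y m), f m q q.1 = q.2 := by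
    intro m q
    have h1 : Tendsto (fun n => (seq n).1 m q q.1) atTop (𝓝 q.2) := by
      have he : (fun n => (seq n).1 m q q.1) = fun _ => q.2 :=
        funext fun n => ((seq n).2 m q).1
      rw [he]; exact tendsto_const_nhds
    exact tendsto_nhds_unique (hf m q q.1) h1
  have hflip : ∀ (m : M) (q : X m × Y m) (a b : X m),
      dist (f m q a) (f m q b) ≤ β' m * dist a b := by
    intro m q a b
    have h1 : Tendsto (fun n => dist ((seq n).1 m q a) ((seq n).1 m q b)) atTop
        (𝓝 (dist (f m q a) (f m q b))) := (hf m q a).dist (hf m q b)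
    exact le_of_tendsto h1 (Filter.Eventually.of_forall fun n => ((seq n).2 m q).2 a b)
  set fS : S := ⟨f, fun m q => ⟨hfbase m q, hflip m q⟩⟩ with hfSdef
  -- zero limit principle
  have hzero : ∀ (E d : ℝ), 0 ≤ d → (∀ n : ℕ, d ≤ E * c₂ ^ n) → d = 0 := by
    intro E d hd h
    have hlim : Tendsto (fun n : ℕ => E * c₂ ^ n) atTop (𝓝 0) := by
      simpa using (tendsto_pow_atTop_nhds_zero_of_lt_one hc₂0le hc₂lt).const_mul E
    have : d ≤ 0 := ge_of_tendsto' hlim h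
    linarith
  -- the limit is a fixed point of the graph transform
  have hfT : ∀ (m : M) (q : X m × Y m) (x : X m), f m q x = G m x (yf fS m q x) := by
    intro m q x
    refine eq_of_dist_eq_zero (hzero (2 * K₀ * dist x q.1 * c₂ / (1 - c₂)) _ dist_nonneg ?_)
    intro n
    have h1 := htail (n+1) m q x
    have h2 := hContr (seq n) fS (K₀ * c₂ ^ n / (1 - c₂))
      (by
        apply div_nonneg (mul_nonneg hK₀0 (pow_nonneg hc₂0le n))
        linarith)
      (fun m q x => htail n m q x) m q x
    calc dist (f m q x) (G m x (yf fS m q x))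
        ≤ dist (f m q x) ((seq (n+1)).1 m q x)
          + dist ((seq (n+1)).1 m q x) (G m x (yf fS m q x)) := dist_triangle _ _ _
      _ ≤ K₀ * c₂ ^ (n+1) / (1 - c₂) * dist x q.1
          + c₂ * (K₀ * c₂ ^ n / (1 - c₂)) * dist x q.1 := by
          refine add_le_add ?_ ?_
          · rw [dist_comm]; exact h1
          · rw [hseqval n m q x]; exact h2
      _ = 2 * K₀ * dist x q.1 * c₂ / (1 - c₂) * c₂ ^ n := by ring
  -- invariance
  have hinv : ∀ (m : M) (q : X m × Y m) (x : X m),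
      (H m (x, f m q x)).2 = f (u m) (H m q) ((H m (x, f m q x)).1) := by
    intro m q x
    have h1 : H m (x, f m q x) = (F m x (yf fS m q x), yf fS m q x) := by
      rw [hfT m q x]; exact hHmap fS m q x
    rw [h1]
    exact (hFix fS m q x).symm
  refine ⟨f, fun m q => ⟨hfbase m q, hflip m q, hinv m q⟩, ?_⟩
  -- uniqueness
  intro f' hf' m q
  funext x
  set f'S : S := ⟨f', fun m q => ⟨(hf' m q).1, (hf' m q).2.1⟩⟩ with hf'Sdef
  have hf'T : ∀ (m : M) (q : X m × Y m) (x : X m), f' m q x = G m x (yf f'S m q x) := by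
    intro m q x
    have h1 := (hH m (x, f' m q x)).1
    have h2 := (hH m (x, f' m q x)).2
    have h3 := (hf' m q).2.2 x
    have h4 : f' (u m) (H m q) (F m x ((H m (x, f' m q x)).2)) = (H m (x, f' m q x)).2 := by
      rw [← h2]; exact h3.symm
    have h5 : (H m (x, f' m q x)).2 = yf f'S m q x := hUniq f'S m q x _ h4
    calc f' m q x = G m x ((H m (x, f' m q x)).2) := h1
      _ = G m x (yf f'S m q x) := by rw [h5]
  have hdiff : ∀ (n : ℕ) (m : M) (q : X m × Y m) (x : X m),
      dist (f' m q x) (f m q x) ≤ K₀ * c₂ ^ n * dist x q.1 := by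
    intro n
    induction n with
    | zero => intro m q x; simpa using hInit f'S fS m q x
    | succ n ih =>
      intro m q x
      have h := hContr f'S fS (K₀ * c₂ ^ n)
        (mul_nonneg hK₀0 (pow_nonneg hc₂0le n)) ih m q x
      calc dist (f' m q x) (f m q x)
          = dist (G m x (yf f'S m q x)) (G m x (yf fS m q x)) := by
            rw [hf'T m q x, hfT m q x]
        _ ≤ c₂ * (K₀ * c₂ ^ n) * dist x q.1 := h
        _ = K₀ * c₂ ^ (n+1) * dist x q.1 := by ring
  refine eq_of_dist_eq_zero (hzero (K₀ * dist x q.1) _ dist_nonneg ?_)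
  intro n
  calc dist (f' m q x) (f m q x) ≤ K₀ * c₂ ^ n * dist x q.1 := hdiff n m q x
    _ = K₀ * dist x q.1 * c₂ ^ n := by ring
end

section
/- Key iteration argument for Hölder/Lipschitz regularity (bounded case, Lipschitz exponent). Let M̄ be a set and w : M̄ → M̄. For each m ∈ M̄ let X̄_m, Ȳ_m, Ŷ_m be metric spaces with distinguished base points ȷ(m) ∈ X̄_m, ı(m) ∈ Ȳ_m, ı₀(m) ∈ Ŷ_m; write |x| = d(x, ȷ(m)) for x ∈ X̄_m, |y| = d(y, ı(m)) for y ∈ Ȳ_m, and |ŷ| = d(ŷ, ı₀(m)) for ŷ ∈ Ŷ_m. Let u_m : X̄_m → X̄_{w(m)}, v_m : X̄_m × Ȳ_m → Ȳ_{w(m)} and g_m : X̄_m × Ȳ_m → Ŷ_{w(m)} be families of maps, μ, κ, θ : M̄ → [0,∞) bounded functions, C₁, C₂ ≥ 0 constants and γ₁, γ₂, ζ₁, ζ₂ ∈ [0,1] exponents. Assume: (i) Lip u_m ≤ μ(m) and u_m(ȷ(m)) = ȷ(w(m)) for every m; (ii) |v_m(x,y)| ≤ κ(m)·|y| for all m and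 (x,y) ∈ X̄_m × Ȳ_m; (iii) for all m ∈ M̄, x₁, x₂ ∈ X̄_m and y ∈ Ȳ_m: d(g_m(x₁,y), g_m(x₂,y)) ≤ C₁·d(x₁,x₂)^{γ₁}·|y|^{ζ₁} + C₂·d(x₁,x₂)^{γ₂}·|y|^{ζ₂} + θ(m)·d(g_{w(m)}(u_m(x₁), v_m(x₁,y)), g_{w(m)}(u_m(x₂), v_m(x₁,y))); (iv) g is bounded: sup_{m∈M̄} sup_{(x,y)∈X̄_m×Ȳ_m} |g_m(x,y)| < ∞; (v) sup_m θ(m) < 1, sup_m κ(m)^{ζ₁}·μ(m)^{γ₁}·θ(m) < 1, and sup_m κ(m)^{ζ₂}·μ(m)^{γ₂}·θ(m) < 1. Then there is a constant C ≥ 0 such that for all m ∈ M̄, x₁, x₂ ∈ X̄_m and y ∈ Ȳ_m: d(g_m(x₁,y), g_m(x₂,y)) ≤ C·C₁·d(x₁,x₂)^{γ₁}·|y|^{ζ₁} + C·C₂·d(x₁,x₂)^{γ₂}·|y|^{ζ₂}. -/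
open Finset Filter

private lemma key_aux (θc c Cc d d' Yv Yv' μc κc γ ζ : ℝ)
    (hθ : 0 ≤ θc) (hμ : 0 ≤ μc) (hκ : 0 ≤ κc) (hC : 0 ≤ Cc)
    (hγ : 0 ≤ γ) (hζ : 0 ≤ ζ)
    (hd0 : 0 ≤ d) (hd'0 : 0 ≤ d') (hY0 : 0 ≤ Yv) (hY'0 : 0 ≤ Yv')
    (hd : d' ≤ μc * d) (hY : Yv' ≤ κc * Yv)
    (hc : κc ^ ζ * μc ^ γ * θc ≤ c) :
    θc * (Cc * d' ^ γ * Yv' ^ ζ) ≤ c * (Cc * d ^ γ * Yv ^ ζ) := by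
  have h1 : d' ^ γ ≤ μc ^ γ * d ^ γ := by
    calc d' ^ γ ≤ (μc * d) ^ γ := Real.rpow_le_rpow hd'0 hd hγ
      _ = μc ^ γ * d ^ γ := Real.mul_rpow hμ hd0
  have h2 : Yv' ^ ζ ≤ κc ^ ζ * Yv ^ ζ := by
    calc Yv' ^ ζ ≤ (κc * Yv) ^ ζ := Real.rpow_le_rpow hY'0 hY hζ
      _ = κc ^ ζ * Yv ^ ζ := Real.mul_rpow hκ hY0
  have hprod : d' ^ γ * Yv' ^ ζ ≤ (μc ^ γ * d ^ γ) * (κc ^ ζ * Yv ^ ζ) :=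
    mul_le_mul h1 h2 (Real.rpow_nonneg hY'0 ζ) (by positivity)
  calc θc * (Cc * d' ^ γ * Yv' ^ ζ) = θc * Cc * (d' ^ γ * Yv' ^ ζ) := by ring
    _ ≤ θc * Cc * ((μc ^ γ * d ^ γ) * (κc ^ ζ * Yv ^ ζ)) :=
        mul_le_mul_of_nonneg_left hprod (by positivity)
    _ = (κc ^ ζ * μc ^ γ * θc) * (Cc * d ^ γ * Yv ^ ζ) := by ring
    _ ≤ c * (Cc * d ^ γ * Yv ^ ζ) :=
        mul_le_mul_of_nonneg_right hc (by positivity)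

/-- Key iteration argument for Hölder/Lipschitz regularity
(bounded case, Lipschitz exponent). -/
theorem key_iteration_argument
    {M : Type*} (w : M → M) (X Y Z : M → Type*)
    [∀ m, MetricSpace (X m)] [∀ m, MetricSpace (Y m)] [∀ m, MetricSpace (Z m)]
    -- distinguished base points
    (j : ∀ m, X m) (i : ∀ m, Y m) (i₀ : ∀ m, Z m)
    (um : ∀ m, X m → X (w m)) (vm : ∀ m, X m × Y m → Y (w m))
    (g : ∀ m, X m × Y m → Z (w m))
    (μ κ θ : M → ℝ)
    (hμ0 : ∀ m, 0 ≤ μ m) (hκ0 : ∀ m, 0 ≤ κ m) (hθ0 : ∀ m, 0 ≤ θ m)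
    (C₁ C₂ : ℝ) (hC₁ : 0 ≤ C₁) (hC₂ : 0 ≤ C₂)
    (γ₁ γ₂ ζ₁ ζ₂ : ℝ)
    (hγ₁ : 0 ≤ γ₁) (hγ₁' : γ₁ ≤ 1) (hγ₂ : 0 ≤ γ₂) (hγ₂' : γ₂ ≤ 1)
    (hζ₁ : 0 ≤ ζ₁) (hζ₁' : ζ₁ ≤ 1) (hζ₂ : 0 ≤ ζ₂) (hζ₂' : ζ₂ ≤ 1)
    -- μ, κ, θ are bounded functions
    (hbdd : ∃ C : ℝ, ∀ m, μ m ≤ C ∧ κ m ≤ C ∧ θ m ≤ C)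
    -- (i): u is Lipschitz and preserves the base points
    (huLip : ∀ m (a b : X m), dist (um m a) (um m b) ≤ μ m * dist a b)
    (huj : ∀ m, um m (j m) = j (w m))
    -- (ii)
    (hv : ∀ m (x : X m) (y : Y m),
      dist (vm m (x, y)) (i (w m)) ≤ κ m * dist y (i m))
    -- (iii): the recursive inequality
    (hrec : ∀ m (x₁ x₂ : X m) (y : Y m),
      dist (g m (x₁, y)) (g m (x₂, y)) ≤
        C₁ * dist x₁ x₂ ^ γ₁ * dist y (i m) ^ ζ₁ +
        C₂ * dist x₁ x₂ ^ γ₂ * dist y (i m) ^ ζ₂ +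
        θ m * dist (g (w m) (um m x₁, vm m (x₁, y)))
                   (g (w m) (um m x₂, vm m (x₁, y))))
    -- (iv): g is bounded
    (hgbdd : ∃ B : ℝ, ∀ m (x : X m) (y : Y m),
      dist (g m (x, y)) (i₀ (w m)) ≤ B)
    -- (v): spectral gap conditions
    (hθ : ∃ c : ℝ, c < 1 ∧ ∀ m, θ m ≤ c)
    (h1 : ∃ c : ℝ, c < 1 ∧ ∀ m, κ m ^ ζ₁ * μ m ^ γ₁ * θ m ≤ c)
    (h2 : ∃ c : ℝ, c < 1 ∧ ∀ m, κ m ^ ζ₂ * μ m ^ γ₂ * θ m ≤ c) :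
    ∃ C : ℝ, 0 ≤ C ∧ ∀ m (x₁ x₂ : X m) (y : Y m),
      dist (g m (x₁, y)) (g m (x₂, y)) ≤
        C * C₁ * dist x₁ x₂ ^ γ₁ * dist y (i m) ^ ζ₁ +
        C * C₂ * dist x₁ x₂ ^ γ₂ * dist y (i m) ^ ζ₂ := by
  obtain ⟨c₀, hc₀, hθc⟩ := hθ
  obtain ⟨c₁, hc₁, h1c⟩ := h1
  obtain ⟨c₂, hc₂, h2c⟩ := h2
  obtain ⟨B, hB⟩ := hgbdd
  set c : ℝ := max (max c₀ c₁) (max c₂ 0) with hcdef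
  have hclt : c < 1 := max_lt (max_lt hc₀ hc₁) (max_lt hc₂ one_pos)
  have hc0 : (0 : ℝ) ≤ c := le_max_of_le_right (le_max_right _ _)
  have hθc' : ∀ m, θ m ≤ c := fun m =>
    le_trans (hθc m) (le_trans (le_max_left _ _) (le_max_left _ _))
  have h1c' : ∀ m, κ m ^ ζ₁ * μ m ^ γ₁ * θ m ≤ c := fun m =>
    le_trans (h1c m) (le_trans (le_max_right _ _) (le_max_left _ _))
  have h2c' : ∀ m, κ m ^ ζ₂ * μ m ^ γ₂ * θ m ≤ c := fun m =>
    le_trans (h2c m) (le_trans (le_max_left _ _) (le_max_right _ _))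
  set B' : ℝ := max B 0 with hB'def
  have hB'0 : (0 : ℝ) ≤ B' := le_max_right _ _
  have key : ∀ n : ℕ, ∀ m (x₁ x₂ : X m) (y : Y m),
      dist (g m (x₁, y)) (g m (x₂, y)) ≤
        (∑ k ∈ Finset.range n, c ^ k) *
          (C₁ * dist x₁ x₂ ^ γ₁ * dist y (i m) ^ ζ₁ +
           C₂ * dist x₁ x₂ ^ γ₂ * dist y (i m) ^ ζ₂) + c ^ n * (2 * B') := by
    intro n
    induction n with
    | zero =>
      intro m x₁ x₂ y
      simp only [Finset.range_zero, Finset.sum_empty, zero_mul, zero_add,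
        pow_zero, one_mul]
      calc dist (g m (x₁, y)) (g m (x₂, y)) ≤
            dist (g m (x₁, y)) (i₀ (w m)) + dist (i₀ (w m)) (g m (x₂, y)) :=
              dist_triangle _ _ _
        _ ≤ B' + B' := add_le_add (le_trans (hB m x₁ y) (le_max_left _ _))
            (by rw [dist_comm]; exact le_trans (hB m x₂ y) (le_max_left _ _))
        _ = 2 * B' := by ring
    | succ n ih =>
      intro m x₁ x₂ y
      have hrec' := hrec m x₁ x₂ y
      have hih := ih (w m) (um m x₁) (um m x₂) (vm m (x₁, y))
      set S : ℝ := ∑ k ∈ Finset.range n, c ^ k with hSdef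
      have hS0 : 0 ≤ S := Finset.sum_nonneg fun k _ => pow_nonneg hc0 k
      have e1 := key_aux (θ m) c C₁ (dist x₁ x₂) (dist (um m x₁) (um m x₂))
        (dist y (i m)) (dist (vm m (x₁, y)) (i (w m))) (μ m) (κ m) γ₁ ζ₁
        (hθ0 m) (hμ0 m) (hκ0 m) hC₁ hγ₁ hζ₁ dist_nonneg dist_nonneg
        dist_nonneg dist_nonneg (huLip m x₁ x₂) (hv m x₁ y) (h1c' m)
      have e2 := key_aux (θ m) c C₂ (dist x₁ x₂) (dist (um m x₁) (um m x₂))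
        (dist y (i m)) (dist (vm m (x₁, y)) (i (w m))) (μ m) (κ m) γ₂ ζ₂
        (hθ0 m) (hμ0 m) (hκ0 m) hC₂ hγ₂ hζ₂ dist_nonneg dist_nonneg
        dist_nonneg dist_nonneg (huLip m x₁ x₂) (hv m x₁ y) (h2c' m)
      have step : θ m * dist (g (w m) (um m x₁, vm m (x₁, y)))
            (g (w m) (um m x₂, vm m (x₁, y))) ≤
          c * S * (C₁ * dist x₁ x₂ ^ γ₁ * dist y (i m) ^ ζ₁ +
                   C₂ * dist x₁ x₂ ^ γ₂ * dist y (i m) ^ ζ₂) +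
            c ^ (n + 1) * (2 * B') := by
        calc θ m * dist (g (w m) (um m x₁, vm m (x₁, y)))
              (g (w m) (um m x₂, vm m (x₁, y))) ≤
            θ m * (S * (C₁ * dist (um m x₁) (um m x₂) ^ γ₁ *
                dist (vm m (x₁, y)) (i (w m)) ^ ζ₁ +
              C₂ * dist (um m x₁) (um m x₂) ^ γ₂ *
                dist (vm m (x₁, y)) (i (w m)) ^ ζ₂) + c ^ n * (2 * B')) :=
              mul_le_mul_of_nonneg_left hih (hθ0 m)
          _ = S * (θ m * (C₁ * dist (um m x₁) (um m x₂) ^ γ₁ *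
                dist (vm m (x₁, y)) (i (w m)) ^ ζ₁)) +
              S * (θ m * (C₂ * dist (um m x₁) (um m x₂) ^ γ₂ *
                dist (vm m (x₁, y)) (i (w m)) ^ ζ₂)) +
              θ m * (c ^ n * (2 * B')) := by ring
          _ ≤ S * (c * (C₁ * dist x₁ x₂ ^ γ₁ * dist y (i m) ^ ζ₁)) +
              S * (c * (C₂ * dist x₁ x₂ ^ γ₂ * dist y (i m) ^ ζ₂)) +
              c * (c ^ n * (2 * B')) := by
                refine add_le_add (add_le_add ?_ ?_) ?_
                · exact mul_le_mul_of_nonneg_left e1 hS0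
                · exact mul_le_mul_of_nonneg_left e2 hS0
                · exact mul_le_mul_of_nonneg_right (hθc' m) (by positivity)
          _ = c * S * (C₁ * dist x₁ x₂ ^ γ₁ * dist y (i m) ^ ζ₁ +
                C₂ * dist x₁ x₂ ^ γ₂ * dist y (i m) ^ ζ₂) +
              c ^ (n + 1) * (2 * B') := by ring
      rw [geom_sum_succ]
      linarith [hrec', step]
  have h1c0 : 0 < 1 - c := by linarith
  refine ⟨1 / (1 - c), by positivity, ?_⟩
  intro m x₁ x₂ y
  have hE0 : 0 ≤ C₁ * dist x₁ x₂ ^ γ₁ * dist y (i m) ^ ζ₁ +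
      C₂ * dist x₁ x₂ ^ γ₂ * dist y (i m) ^ ζ₂ := by positivity
  have hsum : ∀ n : ℕ, (∑ k ∈ Finset.range n, c ^ k) ≤ 1 / (1 - c) := by
    intro n
    rw [le_div_iff₀ h1c0]
    have := geom_sum_mul c n
    have hpn : (0 : ℝ) ≤ c ^ n := pow_nonneg hc0 n
    nlinarith
  have hbound : ∀ n : ℕ, dist (g m (x₁, y)) (g m (x₂, y)) ≤
      (1 / (1 - c)) * (C₁ * dist x₁ x₂ ^ γ₁ * dist y (i m) ^ ζ₁ +
        C₂ * dist x₁ x₂ ^ γ₂ * dist y (i m) ^ ζ₂) + c ^ n * (2 * B') := by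
    intro n
    refine le_trans (key n m x₁ x₂ y) ?_
    have := mul_le_mul_of_nonneg_right (hsum n) hE0
    linarith
  have hten : Tendsto (fun n : ℕ =>
      (1 / (1 - c)) * (C₁ * dist x₁ x₂ ^ γ₁ * dist y (i m) ^ ζ₁ +
        C₂ * dist x₁ x₂ ^ γ₂ * dist y (i m) ^ ζ₂) + c ^ n * (2 * B'))
      atTop (nhds ((1 / (1 - c)) * (C₁ * dist x₁ x₂ ^ γ₁ * dist y (i m) ^ ζ₁ +
        C₂ * dist x₁ x₂ ^ γ₂ * dist y (i m) ^ ζ₂) + 0 * (2 * B'))) := by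
    exact tendsto_const_nhds.add
      (((tendsto_pow_atTop_nhds_zero_of_lt_one hc0 hclt)).mul_const _)
  have hfinal := ge_of_tendsto' hten hbound
  rw [zero_mul, add_zero] at hfinal
  linarith
end

section
/- Differentiability of the fixed point of a parameter-dependent map under minimal hypotheses. Let E be a Banach space and F a normed space, let X ⊆ E and Y ⊆ F be open sets, let G : X × Y → X, let y₀ ∈ Y, and let x : Y → X be a map such that G(x(y), y) = x(y) for all y in some neighborhood of y₀. Assume that x is continuous at y₀, that G is Fréchet differentiable at the point (x(y₀), y₀), and that ‖D₁G(x(y₀), y₀)‖ < 1. Then the operator I − D₁G(x(y₀), y₀) is invertible with bounded inverse, x is Fréchet differentiable at y₀, and Dx(y₀) = (I − D₁G(x(y₀), y₀))⁻¹ ∘ D₂G(x(y₀), y₀). -/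
/-- Differentiability of the fixed point of a parameter-dependent map under
minimal hypotheses. -/
theorem fixed_point_differentiability
    {E F : Type*}
    [NormedAddCommGroup E] [NormedSpace ℝ E] [CompleteSpace E]
    [NormedAddCommGroup F] [NormedSpace ℝ F]
    (X : Set E) (Y : Set F) (hX : IsOpen X) (hY : IsOpen Y)
    (G : E × F → E) (hGmap : ∀ p ∈ X ×ˢ Y, G p ∈ X)
    (y₀ : F) (hy₀ : y₀ ∈ Y)
    (x : F → E) (hxmem : ∀ y ∈ Y, x y ∈ X)
    -- fixed-point equation in a neighborhood of y₀
    (hfix : ∀ᶠ y in nhds y₀, G (x y, y) = x y)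
    (hxcont : ContinuousAt x y₀)
    -- G is Fréchet differentiable at (x y₀, y₀)
    (G' : E × F →L[ℝ] E) (hG' : HasFDerivAt G G' (x y₀, y₀))
    (hnorm : ‖G'.comp (ContinuousLinearMap.inl ℝ E F)‖ < 1) :
    ∃ B : E →L[ℝ] E,
      B * (1 - G'.comp (ContinuousLinearMap.inl ℝ E F)) = 1 ∧
      (1 - G'.comp (ContinuousLinearMap.inl ℝ E F)) * B = 1 ∧
      HasFDerivAt x (B.comp (G'.comp (ContinuousLinearMap.inr ℝ E F))) y₀ := by
  set A := G'.comp (ContinuousLinearMap.inl ℝ E F) with hAdef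
  set Cm := G'.comp (ContinuousLinearMap.inr ℝ E F) with hCdef
  have hG'split : ∀ u : E, ∀ v : F, G' (u, v) = A u + Cm v := by
    intro u v
    have h : (u, v) = ((u, 0) : E × F) + (0, v) := by simp
    rw [h, map_add]
    rfl
  let u : (E →L[ℝ] E)ˣ := Units.oneSub A hnorm
  refine ⟨↑u⁻¹, u.inv_mul, u.mul_inv, ?_⟩
  set B := (↑u⁻¹ : E →L[ℝ] E) with hBdef
  have hB1 : B * (1 - A) = 1 := u.inv_mul
  have hBkey : ∀ w : E, B w - B (A w) = w := by
    intro w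
    have := congrArg (fun T : E →L[ℝ] E => T w) hB1
    simpa [ContinuousLinearMap.sub_apply, ContinuousLinearMap.mul_apply, map_sub] using this
  rw [hasFDerivAt_iff_isLittleO]
  have htend : Filter.Tendsto (fun y => (x y, y)) (nhds y₀) (nhds (x y₀, y₀)) :=
    hxcont.prodMk_nhds Filter.tendsto_id
  have hr0 := hG'.isLittleO.comp_tendsto htend
  have hfix0 : G (x y₀, y₀) = x y₀ := hfix.self_of_nhds
  have hr : (fun y => x y - x y₀ - A (x y - x y₀) - Cm (y - y₀)) =o[nhds y₀]
      (fun y => ((x y - x y₀ : E), (y - y₀ : F))) := by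
    refine hr0.congr' ?_ ?_
    · filter_upwards [hfix] with y hy
      have hp : (x y, y) - (x y₀, y₀) = ((x y - x y₀ : E), (y - y₀ : F)) := rfl
      simp only [Function.comp_apply]
      rw [hy, hfix0, hp, hG'split, sub_add_eq_sub_sub]
    · filter_upwards with y
      rfl
  set ε := (1 - ‖A‖) / 2 with hεdef
  have hε : 0 < ε := by
    have := norm_nonneg A
    simp only [hεdef]
    linarith
  have hbound := hr.def hε
  have hO : (fun y => ((x y - x y₀ : E), (y - y₀ : F))) =O[nhds y₀] (fun y => y - y₀) := by
    rw [Asymptotics.isBigO_iff]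
    refine ⟨(‖Cm‖ + 2 * ε) / ε, ?_⟩
    filter_upwards [hbound] with y hy
    set Δ := x y - x y₀ with hΔ
    set δ := y - y₀ with hδ
    have hM : ‖((Δ, δ) : E × F)‖ = max ‖Δ‖ ‖δ‖ := rfl
    rw [div_mul_eq_mul_div, le_div_iff₀ hε]
    -- key triangle inequality
    have hdec : Δ = (Δ - A Δ - Cm δ) + A Δ + Cm δ := by abel
    have hkey : ‖Δ‖ ≤ ε * max ‖Δ‖ ‖δ‖ + ‖A‖ * ‖Δ‖ + ‖Cm‖ * ‖δ‖ := by
      calc ‖Δ‖ = ‖(Δ - A Δ - Cm δ) + A Δ + Cm δ‖ := by rw [← hdec]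
        _ ≤ ‖Δ - A Δ - Cm δ‖ + ‖A Δ‖ + ‖Cm δ‖ := norm_add₃_le
        _ ≤ ε * max ‖Δ‖ ‖δ‖ + ‖A‖ * ‖Δ‖ + ‖Cm‖ * ‖δ‖ := by
            gcongr
            · simpa [hM] using hy
            · exact A.le_opNorm Δ
            · exact Cm.le_opNorm δ
    have hmax : max ‖Δ‖ ‖δ‖ ≤ ‖Δ‖ + ‖δ‖ :=
      max_le (le_add_of_nonneg_right (norm_nonneg _)) (le_add_of_nonneg_left (norm_nonneg _))
    have e1 : ε * max ‖Δ‖ ‖δ‖ ≤ ε * (‖Δ‖ + ‖δ‖) := mul_le_mul_of_nonneg_left hmax hε.le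
    have e2 : ‖A‖ = 1 - 2 * ε := by rw [hεdef]; ring
    rw [e2] at hkey
    have hΔle : ε * ‖Δ‖ ≤ (‖Cm‖ + ε) * ‖δ‖ := by linarith
    rw [hM]
    rcases le_total ‖Δ‖ ‖δ‖ with h | h
    · rw [max_eq_right h]
      linarith [mul_nonneg (norm_nonneg Cm) (norm_nonneg δ), mul_nonneg hε.le (norm_nonneg δ)]
    · rw [max_eq_left h]
      linarith [mul_nonneg hε.le (norm_nonneg δ)]
  have hr2 := hr.trans_isBigO hO
  have heq : (fun y => x y - x y₀ - (B.comp Cm) (y - y₀)) =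
      fun y => B (x y - x y₀ - A (x y - x y₀) - Cm (y - y₀)) := by
    funext y
    have hsplit : B (x y - x y₀ - A (x y - x y₀) - Cm (y - y₀))
        = (B (x y - x y₀) - B (A (x y - x y₀))) - B (Cm (y - y₀)) := by
      rw [map_sub B _ (Cm (y - y₀)), map_sub B]
    rw [hsplit, hBkey]
    rfl
  rw [heq]
  exact (B.isBigO_comp _ _).trans_isLittleO hr2
end
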